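/- arXiv:1802.04241 — 6 statements merged into one kernel-verified Lean document; each statement's English description precedes it below -/
import Mathlib

section
/- For all n \ge 0, E_{2n} = (-1)^n (2n)! \Delta_n, where \Delta_n is the determinant of the n \times n matrix M with entries M_{ij} = 1/(2(i-j+1))! if i+1 \ge j (interpreting 1/0! = 1 on the superdiagonal where j = i+1), M_{ij} = 0 if j > i+1; i.e., the lower Hessenberg matrix whose (i,j) entry is 1/(2(i-j+1))! for j \le i+1 and 0 otherwise, with 1's on the superdiagonal. -/
/-- Determinant of the `n × n` lower Hessenberg matrix with `(i,j)` entry `1` if `j = i+1`,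
`0` if `j > i+1`, and `f (i-j)` if `j ≤ i` (so the subdiagonal entries are `f 0 = f(i-i)`, etc.;
with `f k = 1/(2k+2)!` this is `1/(2(i-j)+2)!`). -/
noncomputable def hessDet {K : Type*} [Field K] (f : ℕ → K) (n : ℕ) : K :=
  Matrix.det (Matrix.of fun i j : Fin n =>
    if (j : ℕ) = (i : ℕ) + 1 then 1
    else if (i : ℕ) + 1 < (j : ℕ) then 0
    else f ((i : ℕ) - (j : ℕ)))

/-- The power series `cosh x = ∑ x^{2n}/(2n)!` in `ℚ[[x]]`. -/
noncomputable def coshS : PowerSeries ℚ :=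
  PowerSeries.mk fun m => if m % 2 = 0 then ((m.factorial : ℚ))⁻¹ else 0

/-- Auxiliary matrix: Hessenberg matrix whose first column is shifted by `m`. -/
noncomputable def auxM {K : Type*} [Field K] (f : ℕ → K) (m n : ℕ) :
    Matrix (Fin n) (Fin n) K :=
  Matrix.of fun i j : Fin n =>
    if (j : ℕ) = (i : ℕ) + 1 then 1
    else if (i : ℕ) + 1 < (j : ℕ) then 0
    else if (j : ℕ) = 0 then f ((i : ℕ) + m) else f ((i : ℕ) - (j : ℕ))

lemma auxM_zero {K : Type*} [Field K] (f : ℕ → K) (n : ℕ) :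
    (auxM f 0 n).det = hessDet f n := by
  unfold auxM hessDet
  congr 1
  ext i j
  simp only [Matrix.of_apply]
  by_cases h1 : (j : ℕ) = (i : ℕ) + 1
  · rw [if_pos h1, if_pos h1]
  · rw [if_neg h1, if_neg h1]
    by_cases h2 : (i : ℕ) + 1 < (j : ℕ)
    · rw [if_pos h2, if_pos h2]
    · rw [if_neg h2, if_neg h2]
      by_cases h3 : (j : ℕ) = 0
      · rw [if_pos h3]; congr 1; omega
      · rw [if_neg h3]

lemma auxM_det_one {K : Type*} [Field K] (f : ℕ → K) (m : ℕ) :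
    (auxM f m 1).det = f m := by
  rw [Matrix.det_fin_one]
  simp [auxM]

lemma auxM_det_succ_succ {K : Type*} [Field K] (f : ℕ → K) (m n : ℕ) :
    (auxM f m (n+1+1)).det = f m * (auxM f 0 (n+1)).det - (auxM f (m+1) (n+1)).det := by
  rw [Matrix.det_succ_row_zero]
  rw [Fin.sum_univ_succ, Fin.sum_univ_succ]
  have h00 : (auxM f m (n+1+1)) 0 0 = f m := by simp [auxM]
  have hsub0 : (auxM f m (n+1+1)).submatrix Fin.succ ((0 : Fin (n+1+1)).succAbove)
      = auxM f 0 (n+1) := by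
    rw [Fin.succAbove_zero]
    ext i j
    simp only [Matrix.submatrix_apply, auxM, Matrix.of_apply, Fin.val_succ]
    by_cases h1 : (j : ℕ) = (i : ℕ) + 1
    · rw [if_pos (show (j : ℕ) + 1 = (i : ℕ) + 1 + 1 by omega), if_pos h1]
    · rw [if_neg (show ¬((j : ℕ) + 1 = (i : ℕ) + 1 + 1) by omega), if_neg h1]
      by_cases h2 : (i : ℕ) + 1 < (j : ℕ)
      · rw [if_pos (show (i : ℕ) + 1 + 1 < (j : ℕ) + 1 by omega), if_pos h2]
      · rw [if_neg (show ¬((i : ℕ) + 1 + 1 < (j : ℕ) + 1) by omega), if_neg h2,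
          if_neg (show ¬((j : ℕ) + 1 = 0) by omega)]
        by_cases h3 : (j : ℕ) = 0
        · rw [if_pos h3]; congr 1; omega
        · rw [if_neg h3]; congr 1; omega
  have h01 : (auxM f m (n+1+1)) 0 ((0 : Fin (n+1)).succ) = 1 := by
    simp [auxM]
  have hval : ∀ c : Fin (n+1), ((((0 : Fin (n+1)).succ).succAbove c) : ℕ)
      = if (c : ℕ) < 1 then (c : ℕ) else (c : ℕ) + 1 := by
    intro c
    simp only [Fin.succAbove, Fin.lt_def, Fin.coe_castSucc, Fin.val_succ]
    split_ifs with h1 h2 h3 <;>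
      first
      | (simp_all [Fin.coe_castSucc, Fin.val_succ]; omega)
      | simp_all [Fin.coe_castSucc, Fin.val_succ]
  have hsub1 : (auxM f m (n+1+1)).submatrix Fin.succ (((0 : Fin (n+1)).succ).succAbove)
      = auxM f (m+1) (n+1) := by
    ext i j
    simp only [Matrix.submatrix_apply, auxM, Matrix.of_apply, Fin.val_succ]
    rcases Nat.lt_or_ge (j : ℕ) 1 with hj | hj
    · have hj0 : (j : ℕ) = 0 := by omega
      rw [hval j, if_pos hj,
        if_neg (show ¬((j : ℕ) = (i : ℕ) + 1 + 1) by omega),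
        if_neg (show ¬((i : ℕ) + 1 + 1 < (j : ℕ)) by omega), if_pos hj0,
        if_neg (show ¬((j : ℕ) = (i : ℕ) + 1) by omega),
        if_neg (show ¬((i : ℕ) + 1 < (j : ℕ)) by omega), if_pos hj0]
      congr 1; omega
    · rw [hval j, if_neg (show ¬((j : ℕ) < 1) by omega)]
      by_cases h1 : (j : ℕ) = (i : ℕ) + 1
      · rw [if_pos (show (j : ℕ) + 1 = (i : ℕ) + 1 + 1 by omega), if_pos h1]
      · rw [if_neg (show ¬((j : ℕ) + 1 = (i : ℕ) + 1 + 1) by omega), if_neg h1]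
        by_cases h2 : (i : ℕ) + 1 < (j : ℕ)
        · rw [if_pos (show (i : ℕ) + 1 + 1 < (j : ℕ) + 1 by omega), if_pos h2]
        · rw [if_neg (show ¬((i : ℕ) + 1 + 1 < (j : ℕ) + 1) by omega), if_neg h2,
            if_neg (show ¬((j : ℕ) + 1 = 0) by omega),
            if_neg (show ¬((j : ℕ) = 0) by omega)]
          congr 1; omega
  have hz : ∀ i : Fin n, (auxM f m (n+1+1)) 0 ((i.succ : Fin (n+1)).succ) = 0 := by
    intro i
    simp only [auxM, Matrix.of_apply, Fin.val_succ, Fin.val_zero]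
    split_ifs with h1 h2 <;> first | rfl | omega
  rw [h00, h01, hsub0, hsub1]
  have hzero : ∑ i : Fin n,
      (-1 : K) ^ (((((i.succ : Fin (n+1)).succ) : Fin (n+1+1))) : ℕ) *
        (auxM f m (n+1+1)) 0 ((i.succ : Fin (n+1)).succ) *
        ((auxM f m (n+1+1)).submatrix Fin.succ (((i.succ : Fin (n+1)).succ).succAbove)).det = 0 := by
    apply Finset.sum_eq_zero
    intro i _
    rw [hz i]
    ring
  rw [hzero]
  simp [Fin.val_zero, Fin.val_succ]
  ring

lemma auxM_det_sum {K : Type*} [Field K] (f : ℕ → K) :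
    ∀ n m : ℕ, (auxM f m (n+1)).det
      = ∑ k ∈ Finset.range (n+1), (-1 : K) ^ k * f (m + k) * (auxM f 0 (n - k)).det := by
  intro n
  induction n with
  | zero =>
    intro m
    simp [auxM_det_one, Matrix.det_fin_zero, auxM]
  | succ n ih =>
    intro m
    rw [auxM_det_succ_succ, ih (m+1)]
    conv_rhs => rw [Finset.sum_range_succ']
    have hcong : ∀ k ∈ Finset.range (n+1),
        (-1 : K) ^ (k+1) * f (m + (k+1)) * (auxM f 0 (n + 1 - (k+1))).det
        = -((-1 : K) ^ k * f (m + 1 + k) * (auxM f 0 (n - k)).det) := by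
      intro k _
      have e1 : n + 1 - (k+1) = n - k := by omega
      have e2 : m + (k+1) = m + 1 + k := by omega
      rw [e1, e2, pow_succ]
      ring
    rw [Finset.sum_congr rfl hcong, Finset.sum_neg_distrib]
    simp only [pow_zero, one_mul, Nat.add_sub_cancel, Nat.add_zero, Nat.sub_zero]
    ring

lemma hessDet_rec {K : Type*} [Field K] (f : ℕ → K) (n : ℕ) :
    hessDet f (n+1) = ∑ k ∈ Finset.range (n+1), (-1 : K) ^ k * f k * hessDet f (n - k) := by
  rw [← auxM_zero, auxM_det_sum]
  exact Finset.sum_congr rfl fun k _ => by rw [Nat.zero_add, auxM_zero]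

lemma hessDet_zero {K : Type*} [Field K] (f : ℕ → K) : hessDet f 0 = 1 := by
  simp [hessDet, Matrix.det_fin_zero]

lemma sum_even (g : ℕ → ℚ) (hg : ∀ i, i % 2 = 1 → g i = 0) (n : ℕ) :
    ∑ i ∈ Finset.range (2*n+1), g i = ∑ k ∈ Finset.range (n+1), g (2*k) := by
  rw [← Finset.sum_filter_of_ne (p := fun i => i % 2 = 0)
      (fun i _ h => by rcases Nat.mod_two_eq_zero_or_one i with h2 | h2
                       · exact h2
                       · exact absurd (hg i h2) h)]
  rw [show (Finset.range (2*n+1)).filter (fun i => i % 2 = 0)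
      = (Finset.range (n+1)).image (fun k => 2*k) from by
    ext i
    simp only [Finset.mem_filter, Finset.mem_range, Finset.mem_image]
    constructor
    · rintro ⟨h1, h2⟩; exact ⟨i / 2, by omega, by omega⟩
    · rintro ⟨k, hk, rfl⟩; exact ⟨by omega, by omega⟩]
  exact Finset.sum_image (by intro a _ b _ h; beta_reduce at h; omega)

lemma deltaSum (n : ℕ) :
    ∑ j ∈ Finset.range (n+1),
      (-1 : ℚ) ^ j * hessDet (fun k => (((2 * k + 2).factorial : ℚ))⁻¹) j
        * (((2*(n-j)).factorial : ℚ))⁻¹ = if n = 0 then 1 else 0 := by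
  set F : ℕ → ℚ := fun k => (((2 * k + 2).factorial : ℚ))⁻¹ with hF
  cases n with
  | zero => simp [hessDet_zero]
  | succ n =>
    rw [if_neg (Nat.succ_ne_zero n), Finset.sum_range_succ]
    have hlast : (-1 : ℚ) ^ (n+1) * hessDet F (n+1) * (((2*(n+1-(n+1))).factorial : ℚ))⁻¹
        = (-1 : ℚ) ^ (n+1) * hessDet F (n+1) := by
      simp
    rw [hlast]
    have h1 : hessDet F (n+1)
        = ∑ j ∈ Finset.range (n+1), (-1 : ℚ) ^ (n-j) * F (n-j) * hessDet F (n-(n-j)) := by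
      rw [hessDet_rec]
      rw [← Finset.sum_range_reflect]
      apply Finset.sum_congr rfl
      intro j hj
      simp only [Nat.add_sub_cancel]
    rw [h1, Finset.mul_sum, ← Finset.sum_add_distrib]
    apply Finset.sum_eq_zero
    intro j hj
    have hjn : j ≤ n := Nat.lt_succ_iff.mp (Finset.mem_range.mp hj)
    have hDj : hessDet F (n - (n - j)) = hessDet F j := by
      congr 1; omega
    have hFe : F (n - j) = (((2*(n+1-j)).factorial : ℚ))⁻¹ := by
      rw [hF]
      simp only []
      rw [show 2*(n-j)+2 = 2*(n+1-j) from by omega]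
    have sign : (-1 : ℚ) ^ (n+1) * (-1 : ℚ) ^ (n-j) = -(-1 : ℚ) ^ j := by
      rw [← pow_add, show (n+1) + (n-j) = 2*(n-j) + 1 + j from by omega,
        pow_add, pow_add, pow_mul, neg_one_sq, one_pow, pow_one]
      ring
    rw [hDj, hFe]
    linear_combination hessDet F j * (((2*(n+1-j)).factorial : ℚ))⁻¹ * sign

lemma Esum (E : ℕ → ℚ)
    (hE : (PowerSeries.mk fun m => if m % 2 = 0 then E m / (m.factorial : ℚ) else 0) * coshS = 1)
    (n : ℕ) :
    ∑ k ∈ Finset.range (n+1),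
      E (2*k) / (((2*k).factorial : ℚ)) * (((2*(n-k)).factorial : ℚ))⁻¹
      = if n = 0 then 1 else 0 := by
  have h := congrArg (PowerSeries.coeff (R := ℚ) (2*n)) hE
  rw [PowerSeries.coeff_mul] at h
  simp only [coshS, PowerSeries.coeff_mk, PowerSeries.coeff_one] at h
  rw [Finset.Nat.sum_antidiagonal_eq_sum_range_succ_mk] at h
  have heven := sum_even (fun i =>
      (if i % 2 = 0 then E i / (i.factorial : ℚ) else 0) *
      (if (2*n - i) % 2 = 0 then (((2*n - i).factorial : ℚ))⁻¹ else 0))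
    (fun i hi => by simp [hi]) n
  rw [show (2*n).succ = 2*n+1 from rfl] at h
  rw [heven] at h
  have hcong : ∀ k ∈ Finset.range (n+1),
      (if (2*k) % 2 = 0 then E (2*k) / (((2*k).factorial : ℚ)) else 0) *
      (if (2*n - 2*k) % 2 = 0 then (((2*n - 2*k).factorial : ℚ))⁻¹ else 0)
      = E (2*k) / (((2*k).factorial : ℚ)) * (((2*(n-k)).factorial : ℚ))⁻¹ := by
    intro k hk
    have hkn : k ≤ n := Nat.lt_succ_iff.mp (Finset.mem_range.mp hk)
    rw [if_pos (by omega), if_pos (by omega),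
      show 2*n - 2*k = 2*(n-k) from by omega]
  rw [Finset.sum_congr rfl hcong] at h
  rw [h]
  by_cases hn : n = 0 <;> simp [hn]

lemma uniq (a b : ℕ → ℚ)
    (ha : ∀ n, ∑ k ∈ Finset.range (n+1), a k * (((2*(n-k)).factorial : ℚ))⁻¹
      = if n = 0 then 1 else 0)
    (hb : ∀ n, ∑ k ∈ Finset.range (n+1), b k * (((2*(n-k)).factorial : ℚ))⁻¹
      = if n = 0 then 1 else 0) :
    ∀ n, a n = b n := by
  intro n
  induction n using Nat.strong_induction_on with
  | _ n ih =>
    have Ha := ha n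
    have Hb := hb n
    rw [Finset.sum_range_succ] at Ha Hb
    have hs : ∑ k ∈ Finset.range n, a k * (((2*(n-k)).factorial : ℚ))⁻¹
        = ∑ k ∈ Finset.range n, b k * (((2*(n-k)).factorial : ℚ))⁻¹ :=
      Finset.sum_congr rfl fun k hk => by rw [ih k (Finset.mem_range.mp hk)]
    simp only [Nat.sub_self, Nat.mul_zero, Nat.factorial_zero, Nat.cast_one, inv_one,
      mul_one] at Ha Hb
    rw [hs] at Ha
    linarith [Ha, Hb]

/-- If `E : ℕ → ℚ` satisfies `(∑ E_{2n} x^{2n}/(2n)!) * cosh x = 1` (i.e. the `E_{2n}` are the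
secant numbers), then `E_{2n} = (-1)^n (2n)! Δ_n` where `Δ_n` is the Hessenberg determinant with
entries `1/(2(i-j)+2)!` for `j ≤ i`, `1` on the superdiagonal, and `0` above it. -/
theorem stmt3 (E : ℕ → ℚ)
    (hE : (PowerSeries.mk fun m => if m % 2 = 0 then E m / (m.factorial : ℚ) else 0) * coshS = 1)
    (n : ℕ) :
    E (2 * n) = (-1) ^ n * ((2 * n).factorial : ℚ) *
      hessDet (fun k => (((2 * k + 2).factorial : ℚ))⁻¹) n := by
  have key := uniq (fun k => E (2*k) / (((2*k).factorial : ℚ)))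
    (fun k => (-1 : ℚ) ^ k * hessDet (fun k => (((2 * k + 2).factorial : ℚ))⁻¹) k)
    (fun m => by simpa using Esum E hE m)
    (fun m => by simpa using deltaSum m)
  have hm := key n
  have hfac : (((2*n).factorial : ℚ)) ≠ 0 := Nat.cast_ne_zero.mpr (Nat.factorial_ne_zero _)
  rw [div_eq_iff hfac] at hm
  rw [hm]
  ring
end

section
/- Define E_{2n+1,q} := 1 + [2n+1]_q! \sum_{a=1}^{n} (-1)^a \Delta_{a,q} / [2n-2a+1]_q!. Then \sum_{n\ge0} E_{2n+1,q} t^{2n+1}/(q;q)_{2n+1} = tanh_q(t), i.e., it equals sinh_q(t)/cosh_q(t) as formal power series over Q(q). -/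
open Finset Matrix

/-- The `q`-integer `[m]_q = 1 + q + ⋯ + q^{m-1}`. -/
noncomputable def qInt {K : Type*} [Field K] (q : K) (m : ℕ) : K :=
  ∑ i ∈ Finset.range m, q ^ i

/-- The `q`-factorial `[m]_q! = [1]_q [2]_q ⋯ [m]_q`. -/
noncomputable def qFact {K : Type*} [Field K] (q : K) : ℕ → K
  | 0 => 1
  | m + 1 => qFact q m * qInt q (m + 1)

/-- The `q`-Pochhammer symbol `(q;q)_m = (1-q)(1-q²)⋯(1-q^m)`. -/
noncomputable def qPoch {K : Type*} [Field K] (q : K) (m : ℕ) : K :=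
  ∏ i ∈ Finset.range m, (1 - q ^ (i + 1))

section hess
variable {K : Type*} [Field K]

/-- entry pattern of the Hessenberg matrix, as a function on `ℕ`. -/
def hessP (f : ℕ → K) (i j : ℕ) : K :=
  if j = i + 1 then 1 else if i + 1 < j then 0 else f (i - j)

end hess

section hess2
variable {K : Type*} [Field K]

lemma hessDet_eq (f : ℕ → K) (n : ℕ) :
    hessDet f n = Matrix.det (Matrix.of fun i j : Fin n => hessP f i j) := rfl

lemma succAbove_val {n : ℕ} (j : Fin (n+1)) (c : Fin n) :
    ((j.succAbove c : ℕ)) = if (c:ℕ) < (j:ℕ) then (c:ℕ) else (c:ℕ)+1 := by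
  rw [Fin.succAbove]
  split_ifs with h h2 h3
  · simp
  · exact absurd (by simpa [Fin.lt_def] using h) h2
  · exact absurd (by simpa [Fin.lt_def] using h3) h
  · simp

lemma minor_det (f : ℕ → K) (n : ℕ) (j : Fin (n+1)) :
    ((Matrix.of fun i c : Fin (n+1) => hessP f i c).submatrix Fin.castSucc j.succAbove).det
      = hessDet f j := by
  have hj : (j : ℕ) ≤ n := Nat.lt_succ_iff.mp j.isLt
  let e : Fin (j : ℕ) ⊕ Fin (n - (j : ℕ)) ≃ Fin n := finSumFinEquiv.trans (finCongr (by omega))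
  have hel : ∀ r : Fin (j : ℕ), ((e (Sum.inl r) : ℕ)) = r := by intro r; simp [e]
  have her : ∀ s : Fin (n - (j : ℕ)), ((e (Sum.inr s) : ℕ)) = (j : ℕ) + s := by
    intro s; simp [e]
  rw [← Matrix.det_submatrix_equiv_self e]
  have hblocks : (((Matrix.of fun i c : Fin (n+1) => hessP f i c).submatrix Fin.castSucc
      j.succAbove).submatrix e e) =
      Matrix.fromBlocks (Matrix.of fun i c : Fin (j : ℕ) => hessP f i c) 0
        (Matrix.of fun (s : Fin (n - (j : ℕ))) (c : Fin (j : ℕ)) => hessP f ((j : ℕ) + s) (c : ℕ))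
        (Matrix.of fun s t : Fin (n - (j : ℕ)) => hessP f ((j : ℕ) + s) ((j : ℕ) + t + 1)) := by
    ext i c
    rcases i with r | s <;> rcases c with c | t <;>
      simp only [Matrix.submatrix_apply, Matrix.of_apply, Matrix.fromBlocks_apply₁₁,
        Matrix.fromBlocks_apply₁₂, Matrix.fromBlocks_apply₂₁, Matrix.fromBlocks_apply₂₂,
        Fin.coe_castSucc, succAbove_val, hel, her, Matrix.zero_apply]
    · rw [if_pos (by omega)]
    · rw [if_neg (by omega)]
      have hr : (r : ℕ) < (j : ℕ) := r.isLt
      rw [hessP, if_neg (by omega), if_pos (by omega)]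
    · rw [if_pos (by have := c.isLt; omega)]
    · rw [if_neg (by omega)]
  rw [hblocks, Matrix.det_fromBlocks_zero₁₂]
  have hD : (Matrix.of fun s t : Fin (n - (j : ℕ)) =>
      hessP f ((j : ℕ) + s) ((j : ℕ) + t + 1)).det = 1 := by
    rw [Matrix.det_of_lowerTriangular _ ?ht]
    case ht =>
      intro s t hst
      have h2 : (s : ℕ) < (t : ℕ) := OrderDual.toDual_lt_toDual.mp hst
      simp only [Matrix.of_apply, hessP]
      rw [if_neg (by omega), if_pos (by omega)]
    · rw [Finset.prod_eq_one]
      intro s _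
      simp [hessP]
  rw [hD, mul_one, hessDet_eq]

lemma hessDet_succ (f : ℕ → K) (n : ℕ) :
    hessDet f (n+1) = ∑ j ∈ Finset.range (n+1), (-1:K)^(n+j) * f (n - j) * hessDet f j := by
  rw [hessDet_eq, Matrix.det_succ_row _ (Fin.last n), ← Fin.sum_univ_eq_sum_range]
  refine Finset.sum_congr rfl fun j _ => ?_
  rw [Fin.succAbove_last, minor_det]
  have h2 : (Matrix.of fun i c : Fin (n+1) => hessP f i c) (Fin.last n) j = f (n - (j:ℕ)) := by
    simp only [Matrix.of_apply, hessP, Fin.val_last]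
    rw [if_neg (by have := j.isLt; omega), if_neg (by have := j.isLt; omega)]
  rw [h2, Fin.val_last]

lemma sum_range_two_mul (N : ℕ) (h : ℕ → K) :
    ∑ k ∈ range (2*N), h k = ∑ j ∈ range N, (h (2*j) + h (2*j+1)) := by
  induction N with
  | zero => simp
  | succ N ih =>
      have : 2 * (N+1) = (2*N) + 1 + 1 := by ring
      rw [this, Finset.sum_range_succ, Finset.sum_range_succ, ih, Finset.sum_range_succ]
      ring

lemma mk_odd_mul_mk_even (f g : ℕ → K) :
    (PowerSeries.mk fun m => if m % 2 = 1 then f (m/2) else 0) *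
      (PowerSeries.mk fun m => if m % 2 = 0 then g (m/2) else 0)
    = PowerSeries.mk fun m =>
        if m % 2 = 1 then ∑ j ∈ range (m/2+1), f j * g (m/2 - j) else 0 := by
  ext m
  rw [PowerSeries.coeff_mul, PowerSeries.coeff_mk]
  simp only [PowerSeries.coeff_mk]
  rw [Finset.Nat.sum_antidiagonal_eq_sum_range_succ
    (f := fun a b => (if a % 2 = 1 then f (a/2) else 0) * (if b % 2 = 0 then g (b/2) else 0))]
  rcases Nat.even_or_odd m with he | ho
  · have hm : m % 2 = 0 := Nat.even_iff.mp he
    rw [if_neg (by omega)]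
    refine Finset.sum_eq_zero fun k hk => ?_
    have hk' : k < m + 1 := Finset.mem_range.mp hk
    rcases Nat.even_or_odd k with hke | hko
    · rw [if_neg (by have := Nat.even_iff.mp hke; omega), zero_mul]
    · rw [if_pos (Nat.odd_iff.mp hko), if_neg (by have := Nat.odd_iff.mp hko; omega), mul_zero]
  · have hm : m % 2 = 1 := Nat.odd_iff.mp ho
    rw [if_pos hm]
    have h2 : m.succ = 2 * (m/2 + 1) := by omega
    rw [h2, sum_range_two_mul]
    refine Finset.sum_congr rfl fun j hj => ?_
    have hj' : j < m/2 + 1 := Finset.mem_range.mp hj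
    rw [if_neg (by omega), zero_mul, zero_add, if_pos (by omega), if_pos (by omega)]
    congr 2 <;> omega

lemma mk_even_mul_mk_even (f g : ℕ → K) :
    (PowerSeries.mk fun m => if m % 2 = 0 then f (m/2) else 0) *
      (PowerSeries.mk fun m => if m % 2 = 0 then g (m/2) else 0)
    = PowerSeries.mk fun m =>
        if m % 2 = 0 then ∑ j ∈ range (m/2+1), f j * g (m/2 - j) else 0 := by
  ext m
  rw [PowerSeries.coeff_mul, PowerSeries.coeff_mk]
  simp only [PowerSeries.coeff_mk]
  rw [Finset.Nat.sum_antidiagonal_eq_sum_range_succ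
    (f := fun a b => (if a % 2 = 0 then f (a/2) else 0) * (if b % 2 = 0 then g (b/2) else 0))]
  rcases Nat.even_or_odd m with he | ho
  · have hm : m % 2 = 0 := Nat.even_iff.mp he
    rw [if_pos hm]
    have h1 : m.succ = 2 * (m/2) + 1 := by omega
    rw [h1, Finset.sum_range_succ, sum_range_two_mul]
    have hlast : (if (2*(m/2)) % 2 = 0 then f ((2*(m/2))/2) else 0) *
        (if (m - 2*(m/2)) % 2 = 0 then g ((m - 2*(m/2))/2) else 0) = f (m/2) * g 0 := by
      rw [if_pos (by omega), if_pos (by omega)]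
      congr 2 <;> omega
    rw [hlast]
    have hsum : ∑ j ∈ range (m/2), ((if (2*j) % 2 = 0 then f ((2*j)/2) else 0) *
          (if (m - 2*j) % 2 = 0 then g ((m - 2*j)/2) else 0) +
        (if (2*j+1) % 2 = 0 then f ((2*j+1)/2) else 0) *
          (if (m - (2*j+1)) % 2 = 0 then g ((m - (2*j+1))/2) else 0))
        = ∑ j ∈ range (m/2), f j * g (m/2 - j) := by
      refine Finset.sum_congr rfl fun j hj => ?_
      have hj' : j < m/2 := Finset.mem_range.mp hj
      rw [if_neg (show ¬((2*j+1) % 2 = 0) by omega), zero_mul, add_zero,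
        if_pos (show (2*j) % 2 = 0 by omega), if_pos (show (m - 2*j) % 2 = 0 by omega)]
      congr 2 <;> omega
    rw [hsum, Finset.sum_range_succ, Nat.sub_self]
  · have hm : m % 2 = 1 := Nat.odd_iff.mp ho
    rw [if_neg (by omega)]
    refine Finset.sum_eq_zero fun k hk => ?_
    have hk' : k < m + 1 := Finset.mem_range.mp hk
    rcases Nat.even_or_odd k with hke | hko
    · rw [if_pos (Nat.even_iff.mp hke), if_neg (by have := Nat.even_iff.mp hke; omega), mul_zero]
    · rw [if_neg (by have := Nat.odd_iff.mp hko; omega), zero_mul]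

end hess2

section facts
variable {K : Type*} [Field K]

lemma one_sub_mul_qInt (q : K) (m : ℕ) : (1 - q) * qInt q m = 1 - q ^ m := by
  have h := mul_geom_sum q m
  rw [qInt]
  linear_combination -h

lemma qPoch_eq (q : K) (m : ℕ) : qPoch q m = (1 - q) ^ m * qFact q m := by
  induction m with
  | zero => simp [qPoch, qFact]
  | succ m ih =>
      rw [qPoch, Finset.prod_range_succ, ← qPoch, ih, qFact]
      linear_combination (-((1 - q) ^ m * qFact q m)) * one_sub_mul_qInt q (m + 1)
end facts

lemma X_pow_ne_one (m : ℕ) (hm : 1 ≤ m) : (RatFunc.X : RatFunc ℚ) ^ m ≠ 1 := by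
  intro h
  have hX : (RatFunc.X : RatFunc ℚ) = algebraMap (Polynomial ℚ) _ Polynomial.X :=
    (RatFunc.algebraMap_X).symm
  rw [hX, ← map_pow, show (1 : RatFunc ℚ) = algebraMap (Polynomial ℚ) _ 1 by simp] at h
  have h2 := RatFunc.algebraMap_injective (K := ℚ) h
  have hdeg := congrArg Polynomial.natDegree h2
  simp [Polynomial.natDegree_X_pow] at hdeg
  omega

lemma qInt_ne (m : ℕ) (hm : 1 ≤ m) : qInt (RatFunc.X : RatFunc ℚ) m ≠ 0 := by
  intro h
  have h2 := one_sub_mul_qInt (RatFunc.X : RatFunc ℚ) m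
  rw [h, mul_zero] at h2
  exact X_pow_ne_one m hm (by linear_combination h2)

lemma qFact_ne (m : ℕ) : qFact (RatFunc.X : RatFunc ℚ) m ≠ 0 := by
  induction m with
  | zero => simp [qFact]
  | succ m ih => exact mul_ne_zero ih (qInt_ne (m+1) (by omega))

/-- `Δ_{n,q}` in `ℚ(q)` with `q = X`. -/
noncomputable def DeltaQ (n : ℕ) : RatFunc ℚ :=
  hessDet (fun k => (qFact (RatFunc.X : RatFunc ℚ) (2 * k + 2))⁻¹) n

lemma DeltaQ_zero : DeltaQ 0 = 1 := Matrix.det_fin_zero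

lemma DeltaQ_succ (k : ℕ) : DeltaQ (k+1) = ∑ j ∈ range (k+1),
    (-1 : RatFunc ℚ)^(k+j) * (qFact (RatFunc.X : RatFunc ℚ) (2*(k-j)+2))⁻¹ * DeltaQ j := by
  rw [DeltaQ, hessDet_succ]
  rfl

/-- `E_{2n+1,q} := 1 + [2n+1]_q! ∑_{a=1}^{n} (-1)^a Δ_{a,q} / [2n-2a+1]_q!`. -/
noncomputable def Etan (n : ℕ) : RatFunc ℚ :=
  1 + qFact (RatFunc.X : RatFunc ℚ) (2 * n + 1) *
    ∑ a ∈ Finset.Icc 1 n,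
      (-1 : RatFunc ℚ) ^ a * DeltaQ a / qFact (RatFunc.X : RatFunc ℚ) (2 * n - 2 * a + 1)

/-- `cosh_q(t) = ∑ t^{2n}/(q;q)_{2n}` in `ℚ(q)[[t]]`. -/
noncomputable def coshQ : PowerSeries (RatFunc ℚ) :=
  PowerSeries.mk fun m => if m % 2 = 0 then (qPoch (RatFunc.X : RatFunc ℚ) m)⁻¹ else 0

/-- `sinh_q(t) = ∑ t^{2n+1}/(q;q)_{2n+1}` in `ℚ(q)[[t]]`. -/
noncomputable def sinhQ : PowerSeries (RatFunc ℚ) :=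
  PowerSeries.mk fun m => if m % 2 = 1 then (qPoch (RatFunc.X : RatFunc ℚ) m)⁻¹ else 0

/-- the series `∑ (-1)^a Δ_a (1-q)^{-2a} t^{2a}`, which is `1/cosh_q`. -/
noncomputable def Sser : PowerSeries (RatFunc ℚ) :=
  PowerSeries.mk fun m => if m % 2 = 0 then
    (-1 : RatFunc ℚ)^(m/2) * DeltaQ (m/2) * (((1 - RatFunc.X : RatFunc ℚ))^(2*(m/2)))⁻¹ else 0

lemma coshQ_eq : coshQ = PowerSeries.mk fun m =>
    if m % 2 = 0 then (qPoch (RatFunc.X : RatFunc ℚ) (2*(m/2)))⁻¹ else 0 := by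
  ext m
  rw [coshQ, PowerSeries.coeff_mk, PowerSeries.coeff_mk]
  split_ifs with h
  · rw [show 2*(m/2) = m by omega]
  · rfl

lemma sinhQ_eq : sinhQ = PowerSeries.mk fun m =>
    if m % 2 = 1 then (qPoch (RatFunc.X : RatFunc ℚ) (2*(m/2)+1))⁻¹ else 0 := by
  ext m
  rw [sinhQ, PowerSeries.coeff_mk, PowerSeries.coeff_mk]
  split_ifs with h
  · rw [show 2*(m/2)+1 = m by omega]
  · rfl

lemma Sser_mul_coshQ : Sser * coshQ = 1 := by
  rw [coshQ_eq, Sser, mk_even_mul_mk_even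
    (f := fun a => (-1 : RatFunc ℚ)^a * DeltaQ a * (((1 - RatFunc.X : RatFunc ℚ))^(2*a))⁻¹)
    (g := fun a => (qPoch (RatFunc.X : RatFunc ℚ) (2*a))⁻¹)]
  ext m
  rw [PowerSeries.coeff_mk, PowerSeries.coeff_one]
  rcases Nat.even_or_odd m with he | ho
  swap
  · rw [if_neg (by have := Nat.odd_iff.mp ho; omega), if_neg (by have := Nat.odd_iff.mp ho; omega)]
  have hm : m % 2 = 0 := Nat.even_iff.mp he
  rw [if_pos hm]
  by_cases h0 : m = 0
  · subst h0
    rw [if_pos rfl]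
    simp [DeltaQ_zero, qPoch]
  · rw [if_neg h0]
    set n := m/2 with hn
    have hn1 : 1 ≤ n := by omega
    have hterm : ∀ j ∈ range (n+1),
        (-1 : RatFunc ℚ)^j * DeltaQ j * (((1 - RatFunc.X : RatFunc ℚ))^(2*j))⁻¹ *
          (qPoch (RatFunc.X : RatFunc ℚ) (2*(n-j)))⁻¹
        = (((1 - RatFunc.X : RatFunc ℚ))^(2*n))⁻¹ *
          ((-1 : RatFunc ℚ)^j * DeltaQ j * (qFact (RatFunc.X : RatFunc ℚ) (2*(n-j)))⁻¹) := by
      intro j hj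
      have hj' : j ≤ n := by have := Finset.mem_range.mp hj; omega
      rw [qPoch_eq, mul_inv]
      have hpow : (((1 - RatFunc.X : RatFunc ℚ))^(2*j))⁻¹ *
          (((1 - RatFunc.X : RatFunc ℚ))^(2*(n-j)))⁻¹
          = (((1 - RatFunc.X : RatFunc ℚ))^(2*n))⁻¹ := by
        rw [← mul_inv, ← pow_add, show 2*j + 2*(n-j) = 2*n from by omega]
      linear_combination ((-1 : RatFunc ℚ)^j * DeltaQ j *
        (qFact (RatFunc.X : RatFunc ℚ) (2*(n-j)))⁻¹) * hpow
    rw [Finset.sum_congr rfl hterm, ← Finset.mul_sum]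
    suffices h : ∑ j ∈ range (n+1),
        (-1 : RatFunc ℚ)^j * DeltaQ j * (qFact (RatFunc.X : RatFunc ℚ) (2*(n-j)))⁻¹ = 0 by
      rw [h, mul_zero]
    obtain ⟨k, hk⟩ : ∃ k, n = k + 1 := ⟨n - 1, by omega⟩
    rw [hk, Finset.sum_range_succ, show 2*(k+1-(k+1)) = 0 by omega,
      show qFact (RatFunc.X : RatFunc ℚ) 0 = 1 from rfl, inv_one, mul_one, DeltaQ_succ,
      Finset.mul_sum, ← Finset.sum_add_distrib]
    refine Finset.sum_eq_zero fun j hj => ?_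
    have hj' : j ≤ k := by have := Finset.mem_range.mp hj; omega
    rw [show 2*(k+1-j) = 2*(k-j)+2 by omega]
    have hsign : ((-1 : RatFunc ℚ))^(k+1) * (-1 : RatFunc ℚ)^(k+j) = -(-1 : RatFunc ℚ)^j := by
      rw [← pow_add, show k+1+(k+j) = 2*k+1+j by ring, pow_add, pow_add, pow_mul]
      norm_num
    linear_combination (DeltaQ j * (qFact (RatFunc.X : RatFunc ℚ) (2*(k-j)+2))⁻¹) * hsign

lemma key2 (n : ℕ) : Etan n / qPoch (RatFunc.X : RatFunc ℚ) (2*n+1)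
    = ∑ j ∈ range (n+1), (qPoch (RatFunc.X : RatFunc ℚ) (2*j+1))⁻¹ *
        ((-1 : RatFunc ℚ)^(n-j) * DeltaQ (n-j) *
          (((1 - RatFunc.X : RatFunc ℚ))^(2*(n-j)))⁻¹) := by
  have hterm : ∀ j ∈ range (n+1),
      (qPoch (RatFunc.X : RatFunc ℚ) (2*j+1))⁻¹ *
        ((-1 : RatFunc ℚ)^(n-j) * DeltaQ (n-j) *
          (((1 - RatFunc.X : RatFunc ℚ))^(2*(n-j)))⁻¹)
      = (((1 - RatFunc.X : RatFunc ℚ))^(2*n+1))⁻¹ *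
        ((-1 : RatFunc ℚ)^(n-j) * DeltaQ (n-j) *
          (qFact (RatFunc.X : RatFunc ℚ) (2*j+1))⁻¹) := by
    intro j hj
    have hj' : j ≤ n := by have := Finset.mem_range.mp hj; omega
    rw [qPoch_eq, mul_inv]
    have hpow : (((1 - RatFunc.X : RatFunc ℚ))^(2*j+1))⁻¹ *
        (((1 - RatFunc.X : RatFunc ℚ))^(2*(n-j)))⁻¹
        = (((1 - RatFunc.X : RatFunc ℚ))^(2*n+1))⁻¹ := by
      rw [← mul_inv, ← pow_add, show 2*j+1 + 2*(n-j) = 2*n+1 from by omega]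
    linear_combination ((-1 : RatFunc ℚ)^(n-j) * DeltaQ (n-j) *
      (qFact (RatFunc.X : RatFunc ℚ) (2*j+1))⁻¹) * hpow
  rw [Finset.sum_congr rfl hterm, ← Finset.mul_sum, div_eq_mul_inv, qPoch_eq, mul_inv]
  have hsuff : Etan n * (qFact (RatFunc.X : RatFunc ℚ) (2*n+1))⁻¹
      = ∑ j ∈ range (n+1), (-1 : RatFunc ℚ)^(n-j) * DeltaQ (n-j) *
          (qFact (RatFunc.X : RatFunc ℚ) (2*j+1))⁻¹ := by
    have hrefl := Finset.sum_range_reflect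
      (fun j => (-1 : RatFunc ℚ)^(n-j) * DeltaQ (n-j) *
        (qFact (RatFunc.X : RatFunc ℚ) (2*j+1))⁻¹) (n+1)
    rw [← hrefl]
    have hcongr : ∀ j ∈ range (n+1),
        (-1 : RatFunc ℚ)^(n-(n+1-1-j)) * DeltaQ (n-(n+1-1-j)) *
          (qFact (RatFunc.X : RatFunc ℚ) (2*(n+1-1-j)+1))⁻¹
        = (-1 : RatFunc ℚ)^j * DeltaQ j *
          (qFact (RatFunc.X : RatFunc ℚ) (2*(n-j)+1))⁻¹ := by
      intro j hj
      have hj' : j ≤ n := by have := Finset.mem_range.mp hj; omega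
      rw [show n-(n+1-1-j) = j from by omega, show n+1-1-j = n-j from by omega]
    rw [Finset.sum_congr rfl hcongr, Finset.sum_range_succ']
    have h0 : (-1 : RatFunc ℚ)^0 * DeltaQ 0 * (qFact (RatFunc.X : RatFunc ℚ) (2*(n-0)+1))⁻¹
        = (qFact (RatFunc.X : RatFunc ℚ) (2*n+1))⁻¹ := by
      rw [DeltaQ_zero, pow_zero, one_mul, one_mul, Nat.sub_zero]
    rw [h0, Etan, add_mul, one_mul, mul_assoc,
      mul_comm (∑ a ∈ Finset.Icc 1 n, (-1 : RatFunc ℚ) ^ a * DeltaQ a /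
        qFact (RatFunc.X : RatFunc ℚ) (2 * n - 2 * a + 1)),
      ← mul_assoc, mul_inv_cancel₀ (qFact_ne (2*n+1)), one_mul, add_comm]
    congr 1
    rw [← Finset.Ico_add_one_right_eq_Icc, Finset.sum_Ico_eq_sum_range]
    refine Finset.sum_congr rfl fun i hi => ?_
    have hi' : i < n := by have := Finset.mem_range.mp hi; omega
    rw [div_eq_mul_inv, show 2*n - 2*(1+i) + 1 = 2*(n-(i+1))+1 from by omega,
      show (1+i) = i+1 from by omega]
  linear_combination ((((1 - RatFunc.X : RatFunc ℚ))^(2*n+1))⁻¹) * hsuff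

lemma lhs_eq : (PowerSeries.mk fun m =>
      if m % 2 = 1 then Etan (m / 2) / qPoch (RatFunc.X : RatFunc ℚ) m else 0)
    = sinhQ * Sser := by
  rw [sinhQ_eq, Sser, mk_odd_mul_mk_even
    (f := fun a => (qPoch (RatFunc.X : RatFunc ℚ) (2*a+1))⁻¹)
    (g := fun a => (-1 : RatFunc ℚ)^a * DeltaQ a * (((1 - RatFunc.X : RatFunc ℚ))^(2*a))⁻¹)]
  ext m
  rw [PowerSeries.coeff_mk, PowerSeries.coeff_mk]
  split_ifs with h
  · rw [show m = 2*(m/2)+1 from by omega]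
    rw [show (2*(m/2)+1)/2 = m/2 from by omega]
    exact key2 (m/2)
  · rfl

/-- `∑_{n≥0} E_{2n+1,q} t^{2n+1}/(q;q)_{2n+1} = tanh_q(t) = sinh_q(t)/cosh_q(t)`, i.e. the
left-hand series times `cosh_q(t)` equals `sinh_q(t)`, as formal power series over `ℚ(q)`. -/
theorem stmt6 :
    (PowerSeries.mk fun m =>
        if m % 2 = 1 then Etan (m / 2) / qPoch (RatFunc.X : RatFunc ℚ) m else 0) * coshQ
      = sinhQ := by
  rw [lhs_eq, mul_assoc, Sser_mul_coshQ, mul_one]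
end

section
/- For all \gamma \in D_k (derangements of [k]) and all n \ge k, \sum_{\sigma \in S_n, dp(\sigma) = \gamma} q^{maj(\sigma)} = q^{maj(\gamma)} \binom{n}{k}_q, where \binom{n}{k}_q is the Gaussian binomial coefficient. -/
/-- The major index of a permutation of `Fin n`: the sum of the (1-indexed) descent
positions `i ∈ [n-1]` with `σ(i) > σ(i+1)`. -/
def maj {n : ℕ} (σ : Equiv.Perm (Fin n)) : ℕ :=
  ∑ i ∈ Finset.range n,
    if h : i + 1 < n then
      (if σ ⟨i + 1, h⟩ < σ ⟨i, Nat.lt_of_succ_lt h⟩ then i + 1 else 0)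
    else 0

noncomputable def qBinom {K : Type*} [Field K] (q : K) (n k : ℕ) : K :=
  qFact q n / (qFact q k * qFact q (n - k))

/-- The set of non-fixed points of `σ`. -/
def nonfixed {n : ℕ} (σ : Equiv.Perm (Fin n)) : Finset (Fin n) :=
  Finset.univ.filter fun i : Fin n => σ i ≠ i

/-- The derangement part `dp σ`: the reduction of `σ` along its set of non-fixed points,
a permutation of `Fin (nonfixed σ).card` obtained by transporting the restriction of `σ`
to its non-fixed points along the order isomorphism enumerating them increasingly. -/
def dp {n : ℕ} (σ : Equiv.Perm (Fin n)) : Equiv.Perm (Fin (nonfixed σ).card) :=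
  (((nonfixed σ).orderIsoOfFin rfl).toEquiv.symm.permCongr)
    (σ.subtypePerm (by
      intro x
      simp [nonfixed, not_iff_not, Equiv.apply_eq_iff_eq]))

open Finset Polynomial

noncomputable abbrev qX : RatFunc ℚ := RatFunc.X

lemma qInt_ne_zero (m : ℕ) (hm : 1 ≤ m) : qInt qX m ≠ 0 := by
  have h1 : qInt qX m = algebraMap (Polynomial ℚ) (RatFunc ℚ) (∑ i ∈ range m, Polynomial.X ^ i) := by
    rw [map_sum]
    simp only [map_pow]
    rfl
  rw [h1]
  apply RatFunc.algebraMap_ne_zero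
  intro h
  have := congrArg (fun p => Polynomial.coeff p 0) h
  simp only [Polynomial.finset_sum_coeff, Polynomial.coeff_X_pow, Polynomial.coeff_zero] at this
  rw [Finset.sum_eq_single 0 (by intro b _ hb; simp [Ne.symm hb]) (by simp; omega)] at this
  simp at this

lemma qFact_ne_zero (m : ℕ) : qFact qX m ≠ 0 := by
  induction m with
  | zero => simp [qFact]
  | succ m ih => exact mul_ne_zero ih (qInt_ne_zero (m+1) (by omega))

/-- Gaussian binomial, correct (0) out of range. -/
noncomputable def B (n k : ℕ) : RatFunc ℚ := if k ≤ n then qBinom qX n k else 0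

lemma B_eq (n k : ℕ) (h : k ≤ n) : B n k = qBinom qX n k := if_pos h

lemma B_zero (n : ℕ) : B n 0 = 1 := by
  simp [B, qBinom, qFact, qFact_ne_zero]

lemma B_self (n : ℕ) : B n n = 1 := by
  simp [B, qBinom, qFact]
  exact qFact_ne_zero n

lemma B_of_gt {n k : ℕ} (h : n < k) : B n k = 0 := by
  simp only [B, if_neg (by omega : ¬ k ≤ n)]

lemma qInt_split (a b : ℕ) : qInt qX (a + b) = qInt qX a + qX ^ a * qInt qX b := by
  rw [qInt, Finset.sum_range_add]
  simp [qInt, Finset.mul_sum, pow_add]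

/-- Pascal 1: B (m+1) k = B m k + X^(m+1-k) * B m (k-1), for 1 ≤ k ≤ m+1 -/
lemma B_pascal1 {m k : ℕ} (hk1 : 1 ≤ k) (hk2 : k ≤ m + 1) :
    B (m+1) k = B m k + qX ^ (m+1-k) * B m (k-1) := by
  rcases eq_or_lt_of_le hk2 with rfl | hlt
  · rw [B_self, B_of_gt (by omega), Nat.sub_self]
    have : m + 1 - 1 = m := by omega
    rw [this, B_self, pow_zero]
    ring
  · have hkm : k ≤ m := by omega
    rw [B_eq _ _ hk2, B_eq _ _ hkm, B_eq _ _ (by omega)]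
    obtain ⟨j, rfl⟩ : ∃ j, k = j + 1 := ⟨k - 1, by omega⟩
    simp only [Nat.add_sub_cancel]
    rw [qBinom, qBinom, qBinom]
    have e1 : m + 1 - (j+1) = m - j := by omega
    have e2 : m - (j+1) + 1 = m - j := by omega
    have hq : qFact qX (m+1) = qFact qX m * qInt qX (m+1) := rfl
    have hs : qInt qX (m+1) = qInt qX (m - j) + qX ^ (m - j) * qInt qX (j+1) := by
      have : m + 1 = (m - j) + (j + 1) := by omega
      rw [this, qInt_split]
    have hfj : qFact qX (m - j) = qFact qX (m - (j+1)) * qInt qX (m - j) := by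
      rw [← e2]; rfl
    have hfk : qFact qX (j+1) = qFact qX j * qInt qX (j+1) := rfl
    have n1 : qInt qX (m - j) ≠ 0 := qInt_ne_zero _ (by omega)
    have n2 : qInt qX (j+1) ≠ 0 := qInt_ne_zero _ (by omega)
    have n3 : qFact qX j ≠ 0 := qFact_ne_zero j
    have n4 : qFact qX (m - (j+1)) ≠ 0 := qFact_ne_zero _
    have n2' : qInt qX (1+j) ≠ 0 := by rw [add_comm]; exact n2
    rw [e1, hq, hs, hfj, hfk]
    field_simp

/-- Pascal 2 -/
lemma B_pascal2 {m k : ℕ} (hk1 : 1 ≤ k) (hk2 : k ≤ m + 1) :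
    B (m+1) k = qX ^ k * B m k + B m (k-1) := by
  rcases eq_or_lt_of_le hk2 with rfl | hlt
  · rw [B_self, B_of_gt (by omega)]
    have : m + 1 - 1 = m := by omega
    rw [this, B_self]
    ring
  · have hkm : k ≤ m := by omega
    rw [B_eq _ _ hk2, B_eq _ _ hkm, B_eq _ _ (by omega)]
    obtain ⟨j, rfl⟩ : ∃ j, k = j + 1 := ⟨k - 1, by omega⟩
    simp only [Nat.add_sub_cancel]
    rw [qBinom, qBinom, qBinom]
    have e1 : m + 1 - (j+1) = m - j := by omega
    have e2 : m - (j+1) + 1 = m - j := by omega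
    have hq : qFact qX (m+1) = qFact qX m * qInt qX (m+1) := rfl
    have hs : qInt qX (m+1) = qInt qX (j+1) + qX ^ (j+1) * qInt qX (m - j) := by
      have : m + 1 = (j + 1) + (m - j) := by omega
      rw [this, qInt_split]
    have hfj : qFact qX (m - j) = qFact qX (m - (j+1)) * qInt qX (m - j) := by
      rw [← e2]; rfl
    have hfk : qFact qX (j+1) = qFact qX j * qInt qX (j+1) := rfl
    have n1 : qInt qX (m - j) ≠ 0 := qInt_ne_zero _ (by omega)
    have n2 : qInt qX (j+1) ≠ 0 := qInt_ne_zero _ (by omega)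
    have n3 : qFact qX j ≠ 0 := qFact_ne_zero j
    have n4 : qFact qX (m - (j+1)) ≠ 0 := qFact_ne_zero _
    have n2' : qInt qX (1+j) ≠ 0 := by rw [add_comm]; exact n2
    rw [e1, hq, hs, hfj, hfk]
    field_simp
    ring

/-! ### Combinatorial core: descent statistic on subsets of ℕ -/

/-- rank: number of elements of `S` below `m`. -/
def rk (S : Finset ℕ) (m : ℕ) : ℕ := (S.filter (· < m)).card

/-- weight of the pair of positions (i-1, i), contributing `i` when there is a descent,
relative to data `a D : ℕ → Bool` (1-indexed). -/
def wt (a D : ℕ → Bool) (S : Finset ℕ) (i : ℕ) : ℕ :=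
  if i - 1 ∈ S then
    (if i ∈ S then (if D (rk S i) then i else 0)
     else (if a (rk S i) then i else 0))
  else
    (if i ∈ S then (if a (rk S (i+1)) then 0 else i) else 0)

/-- the full statistic: sum of `wt` over positions `i < n`. -/
def fs (a D : ℕ → Bool) (n : ℕ) (S : Finset ℕ) : ℕ :=
  ∑ i ∈ Finset.range n, wt a D S i

def Compat (a D : ℕ → Bool) (k : ℕ) : Prop :=
  ∀ j, 1 ≤ j → j + 1 ≤ k →
    ((a j = true ∧ a (j+1) = false → D j = true) ∧
     (a j = false ∧ a (j+1) = true → D j = false))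

def sD (D : ℕ → Bool) (k : ℕ) : ℕ := ∑ j ∈ Finset.range k, if D j then j else 0

lemma wt_zero (a D : ℕ → Bool) (S : Finset ℕ) : wt a D S 0 = 0 := by
  unfold wt; split_ifs <;> rfl

lemma rk_eq_of_subset_range {S : Finset ℕ} {m n : ℕ} (h : S ⊆ Finset.range n) (hnm : n ≤ m) :
    rk S m = S.card := by
  unfold rk
  congr 1
  apply Finset.filter_true_of_mem
  intro x hx
  have := Finset.mem_range.mp (h hx)
  omega

lemma rk_insert_of_le {S : Finset ℕ} {x m : ℕ} (h : m ≤ x) : rk (insert x S) m = rk S m := by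
  unfold rk
  rw [Finset.filter_insert, if_neg (by omega)]

lemma wt_insert_of_lt {a D : ℕ → Bool} {S : Finset ℕ} {x i : ℕ} (h : i < x) :
    wt a D (insert x S) i = wt a D S i := by
  have e1 : rk (insert x S) i = rk S i := rk_insert_of_le (by omega)
  have e2 : rk (insert x S) (i+1) = rk S (i+1) := rk_insert_of_le (by omega)
  have h1 : ¬ (i - 1 = x) := by omega
  have h2 : ¬ (i = x) := by omega
  simp only [wt, Finset.mem_insert, e1, e2, h1, h2, false_or]

lemma fs_insert_top {a D : ℕ → Bool} {S : Finset ℕ} {m : ℕ} (h : S ⊆ Finset.range m) :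
    fs a D (m+1) (insert m S) =
      fs a D m S + (if m - 1 ∈ S then (if D S.card then m else 0)
        else (if a (S.card + 1) then 0 else m)) := by
  have hm : m ∉ S := fun hc => by simpa using Finset.mem_range.mp (h hc)
  rw [fs, Finset.sum_range_succ]
  congr 1
  · rw [fs]
    apply Finset.sum_congr rfl
    intro i hi
    exact wt_insert_of_lt (Finset.mem_range.mp hi)
  · -- wt at position m on insert m S
    rcases Nat.eq_zero_or_pos m with rfl | hm0
    · have hS : S = ∅ := Finset.subset_empty.mp (by simpa using h)
      subst hS
      rw [wt_zero]
      split_ifs <;> rfl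
    · have e1 : rk (insert m S) m = S.card := by
        rw [rk_insert_of_le le_rfl, rk_eq_of_subset_range h le_rfl]
      have e2 : rk (insert m S) (m+1) = S.card + 1 := by
        unfold rk
        rw [Finset.filter_insert, if_pos (by omega)]
        rw [Finset.card_insert_of_notMem (by intro hc; exact hm (Finset.mem_filter.mp hc).1)]
        congr 1
        rw [Finset.filter_true_of_mem]
        intro x hx; have := Finset.mem_range.mp (h hx); omega
      have h2 : m ∈ insert m S := Finset.mem_insert_self m S
      by_cases hc : m - 1 ∈ S
      · have h1 : m - 1 ∈ insert m S := Finset.mem_insert_of_mem hc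
        simp only [wt, if_pos h1, if_pos h2, e1, if_pos hc]
      · have h1 : m - 1 ∉ insert m S := by
          rw [Finset.mem_insert]; push_neg; exact ⟨by omega, hc⟩
        simp only [wt, if_neg h1, if_pos h2, e2, if_neg hc]

lemma fs_empty (a D : ℕ → Bool) (n : ℕ) : fs a D n ∅ = 0 := by
  unfold fs
  apply Finset.sum_eq_zero
  intro i _
  unfold wt
  simp

lemma fs_top_notmem {a D : ℕ → Bool} {S : Finset ℕ} {m : ℕ} (h : S ⊆ Finset.range m) :
    fs a D (m+1) S = fs a D m S + (if m - 1 ∈ S then (if a S.card then m else 0) else 0) := by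
  rw [fs, Finset.sum_range_succ, ← fs]
  congr 1
  have hm : m ∉ S := fun hc => by simpa using Finset.mem_range.mp (h hc)
  unfold wt
  by_cases hc : m - 1 ∈ S
  · have hm1 : 0 < m := by
      rcases Nat.eq_zero_or_pos m with rfl | h1
      · exact absurd (h hc) (by simp)
      · exact h1
    rw [if_pos hc, if_neg hm, rk_eq_of_subset_range h le_rfl, if_pos hc]
  · rw [if_neg hc, if_neg hm, if_neg hc]


lemma sum_powersetCard_split {β : Type*} [AddCommMonoid β] (m k : ℕ) (F : Finset ℕ → β) :
    ∑ S ∈ (Finset.range (m+1)).powersetCard (k+1), F S =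
      ∑ S ∈ (Finset.range m).powersetCard (k+1), F S +
      ∑ S ∈ (Finset.range m).powersetCard k, F (insert m S) := by
  rw [Finset.range_add_one, Finset.powersetCard_succ_insert (by simp)]
  rw [Finset.sum_union]
  · congr 1
    rw [Finset.sum_image]
    intro S1 h1 S2 h2 hins
    have hm1 : m ∉ S1 := fun hc => by
      simpa using Finset.mem_range.mp ((Finset.mem_powersetCard.mp h1).1 hc)
    have hm2 : m ∉ S2 := fun hc => by
      simpa using Finset.mem_range.mp ((Finset.mem_powersetCard.mp h2).1 hc)
    rw [← Finset.erase_insert hm1, ← Finset.erase_insert hm2, hins]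
  · rw [Finset.disjoint_left]
    intro S h1 h2
    have hm1 : m ∉ S := fun hc => by
      simpa using Finset.mem_range.mp ((Finset.mem_powersetCard.mp h1).1 hc)
    obtain ⟨S', _, rfl⟩ := Finset.mem_image.mp h2
    exact hm1 (Finset.mem_insert_self m S')

lemma card_of_mem_pC {S : Finset ℕ} {m k : ℕ}
    (h : S ∈ (Finset.range m).powersetCard k) : S ⊆ Finset.range m ∧ S.card = k :=
  Finset.mem_powersetCard.mp h

lemma shapeA (x P Q : RatFunc ℚ) (e1 c1 e2 c2 g h : ℕ)
    (h1 : e1 + c1 = g) (h2 : e2 + c2 = g + h) :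
    x^e1 * P * x^c1 + x^e2 * Q * x^c2 = x^g * (P + x^h * Q) := by
  have t1 : x^e1 * P * x^c1 = x^g * P := by rw [mul_right_comm, ← pow_add, h1]
  have t2 : x^e2 * Q * x^c2 = x^(g+h) * Q := by rw [mul_right_comm, ← pow_add, h2]
  rw [t1, t2, pow_add]
  ring

lemma shapeB (x P Q : RatFunc ℚ) (e1 c1 e2 c2 g h : ℕ)
    (h1 : e1 + c1 = g + h) (h2 : e2 + c2 = g) :
    x^e1 * P * x^c1 + x^e2 * Q * x^c2 = x^g * (x^h * P + Q) := by
  have t1 : x^e1 * P * x^c1 = x^(g+h) * P := by rw [mul_right_comm, ← pow_add, h1]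
  have t2 : x^e2 * Q * x^c2 = x^g * Q := by rw [mul_right_comm, ← pow_add, h2]
  rw [t1, t2, pow_add]
  ring

lemma core (m : ℕ) : ∀ k a D, Compat a D k → 1 ≤ k → k ≤ m + 1 →
    ((∑ S ∈ (Finset.range m).powersetCard (k-1), qX ^ fs a D (m+1) (insert m S))
        = qX ^ (sD D k + (if a k then 0 else (m+1-k))) * B m (k-1))
    ∧ ((∑ S ∈ (Finset.range m).powersetCard k, qX ^ fs a D (m+1) S)
        = qX ^ (sD D k + (if a k then k else 0)) * B m k) := by
  induction m with
  | zero =>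
    intro k a D hcomp hk1 hk2
    have hk : k = 1 := by omega
    subst hk
    constructor
    · rw [Nat.sub_self, Finset.powersetCard_zero, Finset.sum_singleton]
      have h1 : fs a D 1 (insert 0 ∅) = 0 := by
        rw [fs, Finset.sum_range_one, wt_zero]
      have h2 : sD D 1 = 0 := by
        rw [sD, Finset.sum_range_one]; split_ifs <;> rfl
      have h3 : (if a 1 = true then 0 else (0+1-1)) = 0 := by split_ifs <;> rfl
      rw [h1, h2, h3, B_zero]
      norm_num
    · have h1 : (Finset.range 0).powersetCard 1 = ∅ :=
        Finset.powersetCard_eq_empty.mpr (by simp)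
      rw [h1, Finset.sum_empty, B_of_gt (by omega), mul_zero]
  | succ m ih =>
    intro k a D hcomp hk1 hk2
    -- G0 part (second conjunct), proved first
    have hG0 : (∑ S ∈ (Finset.range (m+1)).powersetCard k, qX ^ fs a D (m+1+1) S)
        = qX ^ (sD D k + (if a k then k else 0)) * B (m+1) k := by
      rcases Nat.lt_or_ge (m+1) k with hbig | hk3
      · have h1 : (Finset.range (m+1)).powersetCard k = ∅ :=
          Finset.powersetCard_eq_empty.mpr (by simpa using hbig)
        rw [h1, Finset.sum_empty, B_of_gt hbig, mul_zero]
      · obtain ⟨j, rfl⟩ : ∃ j, k = j + 1 := ⟨k-1, by omega⟩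
        rw [sum_powersetCard_split]
        have hc1 : ∀ S ∈ (Finset.range m).powersetCard (j+1),
            qX ^ fs a D (m+1+1) S = qX ^ fs a D (m+1) S * qX ^ (0:ℕ) := by
          intro S hS
          obtain ⟨hsub, hcard⟩ := Finset.mem_powersetCard.mp hS
          rw [pow_zero, mul_one]
          congr 1
          have hsub' : S ⊆ Finset.range (m+1) :=
            hsub.trans (Finset.range_subset_range.mpr (by omega))
          rw [fs_top_notmem hsub']
          have hnm : (m+1) - 1 ∉ S := fun hc => by
            have := Finset.mem_range.mp (hsub hc); omega
          rw [if_neg hnm, add_zero]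
        have hc2 : ∀ S ∈ (Finset.range m).powersetCard j,
            qX ^ fs a D (m+1+1) (insert m S) =
              qX ^ fs a D (m+1) (insert m S) * qX ^ (if a (j+1) = true then m+1 else 0) := by
          intro S hS
          obtain ⟨hsub, hcard⟩ := Finset.mem_powersetCard.mp hS
          rw [← pow_add]
          congr 1
          have hmns : m ∉ S := fun hc => by
            have := Finset.mem_range.mp (hsub hc); omega
          have hsub' : insert m S ⊆ Finset.range (m+1) := by
            intro x hx
            rcases Finset.mem_insert.mp hx with rfl | hx'
            · exact Finset.mem_range.mpr (by omega)
            · exact Finset.mem_range.mpr (by have := Finset.mem_range.mp (hsub hx'); omega)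
          rw [fs_top_notmem hsub']
          have hmm : (m+1) - 1 ∈ insert m S := by simp
          rw [if_pos hmm]
          have hcard' : (insert m S).card = j+1 := by
            rw [Finset.card_insert_of_notMem hmns, hcard]
          rw [hcard']
        rw [Finset.sum_congr rfl hc1, Finset.sum_congr rfl hc2, ← Finset.sum_mul,
          ← Finset.sum_mul]
        obtain ⟨hA, hB⟩ := ih (j+1) a D hcomp (by omega) (by omega)
        rw [Nat.add_sub_cancel] at hA
        rw [hB, hA]
        rw [B_pascal1 (k := j+1) (by omega) (by omega), Nat.add_sub_cancel]
        by_cases hak : a (j+1) = true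
        · simp only [hak, if_true]
          exact shapeA _ _ _ _ _ _ _ _ _ rfl (by omega)
        · simp only [hak, if_false, Bool.false_eq_true]
          exact shapeA _ _ _ _ _ _ _ _ _ rfl (by omega)
    refine ⟨?_, hG0⟩
    -- G1 part (first conjunct)
    rcases Nat.lt_or_ge k 2 with hk1' | hk2'
    · -- k = 1
      have hk : k = 1 := by omega
      subst hk
      rw [Nat.sub_self, Finset.powersetCard_zero, Finset.sum_singleton]
      have hins : fs a D (m+1+1) (insert (m+1) ∅) = if a 1 = true then 0 else m+1 := by
        rw [fs_insert_top (by simp), fs_empty]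
        have : (m+1) - 1 ∉ (∅ : Finset ℕ) := by simp
        rw [if_neg this]
        simp
      have h2 : sD D 1 = 0 := by
        rw [sD, Finset.sum_range_one]; split_ifs <;> rfl
      rw [hins, h2, B_zero, mul_one, zero_add]
      congr 1

    · -- k ≥ 2
      obtain ⟨j, rfl⟩ : ∃ j, k = j + 2 := ⟨k-2, by omega⟩
      have hjm : j + 2 ≤ m + 2 := hk2
      have hsk : j + 2 - 1 = j + 1 := rfl
      rw [hsk, sum_powersetCard_split]
      -- chunk A
      have hcA : ∀ S ∈ (Finset.range m).powersetCard (j+1),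
          qX ^ fs a D (m+1+1) (insert (m+1) S) =
            qX ^ fs a D (m+1) S * qX ^ (if a (j+2) = true then 0 else m+1) := by
        intro S hS
        obtain ⟨hsub, hcard⟩ := Finset.mem_powersetCard.mp hS
        rw [← pow_add]
        congr 1
        have hsub' : S ⊆ Finset.range (m+1) :=
          hsub.trans (Finset.range_subset_range.mpr (by omega))
        rw [fs_insert_top hsub']
        have hnm : (m+1) - 1 ∉ S := fun hc => by
          have := Finset.mem_range.mp (hsub hc); omega
        rw [if_neg hnm, hcard]
      -- chunk B
      have hcB : ∀ S ∈ (Finset.range m).powersetCard j,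
          qX ^ fs a D (m+1+1) (insert (m+1) (insert m S)) =
            qX ^ fs a D (m+1) (insert m S) * qX ^ (if D (j+1) = true then m+1 else 0) := by
        intro S hS
        obtain ⟨hsub, hcard⟩ := Finset.mem_powersetCard.mp hS
        rw [← pow_add]
        congr 1
        have hmns : m ∉ S := fun hc => by
          have := Finset.mem_range.mp (hsub hc); omega
        have hsub' : insert m S ⊆ Finset.range (m+1) := by
          intro x hx
          rcases Finset.mem_insert.mp hx with rfl | hx'
          · exact Finset.mem_range.mpr (by omega)
          · exact Finset.mem_range.mpr (by have := Finset.mem_range.mp (hsub hx'); omega)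
        rw [fs_insert_top hsub']
        have hmm : (m+1) - 1 ∈ insert m S := by simp
        rw [if_pos hmm]
        have hcard' : (insert m S).card = j+1 := by
          rw [Finset.card_insert_of_notMem hmns, hcard]
        rw [hcard']
      rw [Finset.sum_congr rfl hcA, Finset.sum_congr rfl hcB, ← Finset.sum_mul,
        ← Finset.sum_mul]
      have hcomp' : Compat a D (j+1) := fun i hi1 hi2 => hcomp i hi1 (by omega)
      obtain ⟨hA, hB⟩ := ih (j+1) a D hcomp' (by omega) (by omega)
      rw [Nat.add_sub_cancel] at hA
      rw [hB, hA]
      have hsD : sD D (j+2) = sD D (j+1) + (if D (j+1) = true then (j+1) else 0) := by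
        rw [sD, sD, Finset.sum_range_succ]
      rw [hsD]
      -- compat facts
      have hco := hcomp (j+1) (by omega) (by omega)
      by_cases hα : a (j+2) = true
      · by_cases hβ : a (j+1) = true
        · by_cases hd : D (j+1) = true
          · simp only [hα, hβ, hd, if_true]
            rw [B_pascal1 (k := j+1) (by omega) (by omega), Nat.add_sub_cancel]
            exact shapeA _ _ _ _ _ _ _ _ _ (by omega) (by omega)
          · simp only [hα, hβ, hd, if_true, if_false, Bool.false_eq_true]
            rw [B_pascal2 (k := j+1) (by omega) (by omega), Nat.add_sub_cancel]
            exact shapeB _ _ _ _ _ _ _ _ _ (by omega) (by omega)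
        · have hd : D (j+1) = false := by
            have := hco.2 ⟨Bool.not_eq_true _ ▸ (by simpa using hβ), hα⟩
            exact this
          simp only [hα, hβ, hd, if_true, if_false, Bool.false_eq_true]
          rw [B_pascal1 (k := j+1) (by omega) (by omega), Nat.add_sub_cancel]
          exact shapeA _ _ _ _ _ _ _ _ _ (by omega) (by omega)
      · by_cases hβ : a (j+1) = true
        · have hd : D (j+1) = true := hco.1 ⟨hβ, by simpa using hα⟩
          simp only [hα, hβ, hd, if_true, if_false, Bool.false_eq_true]
          rw [B_pascal2 (k := j+1) (by omega) (by omega), Nat.add_sub_cancel]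
          exact shapeB _ _ _ _ _ _ _ _ _ (by omega) (by omega)
        · by_cases hd : D (j+1) = true
          · simp only [hα, hβ, hd, if_true, if_false, Bool.false_eq_true]
            rw [B_pascal1 (k := j+1) (by omega) (by omega), Nat.add_sub_cancel]
            exact shapeA _ _ _ _ _ _ _ _ _ (by omega) (by omega)
          · simp only [hα, hβ, hd, if_false, Bool.false_eq_true]
            rw [B_pascal2 (k := j+1) (by omega) (by omega), Nat.add_sub_cancel]
            exact shapeB _ _ _ _ _ _ _ _ _ (by omega) (by omega)

/-- The full combinatorial identity. -/
lemma core_sum (n k : ℕ) (a D : ℕ → Bool) (hcomp : Compat a D k) (hk : k ≤ n) :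
    (∑ S ∈ (Finset.range n).powersetCard k, qX ^ fs a D n S)
      = qX ^ sD D k * B n k := by
  rcases Nat.eq_zero_or_pos k with rfl | hk1
  · rw [Finset.powersetCard_zero, Finset.sum_singleton, fs_empty, B_zero]
    have : sD D 0 = 0 := by rw [sD, Finset.sum_range_zero]
    rw [this, mul_one]
  · obtain ⟨m, rfl⟩ : ∃ m, n = m + 1 := ⟨n-1, by omega⟩
    obtain ⟨hA, hB⟩ := core m k a D hcomp hk1 hk
    obtain ⟨j, rfl⟩ : ∃ j, k = j + 1 := ⟨k-1, by omega⟩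
    rw [Nat.add_sub_cancel] at hA
    rw [sum_powersetCard_split, hA, hB]
    by_cases hak : a (j+1) = true
    · simp only [hak, if_true]
      rw [B_pascal2 (k := j+1) (by omega) (by omega), Nat.add_sub_cancel]
      rw [pow_add, mul_add]
      ring
    · simp only [hak, if_false, Bool.false_eq_true]
      rw [B_pascal1 (k := j+1) (by omega) (by omega), Nat.add_sub_cancel]
      rw [pow_add, mul_add]
      ring

/-! ### Permutation side -/

def aof {k : ℕ} (γ : Equiv.Perm (Fin k)) : ℕ → Bool := fun r =>
  if h : r - 1 < k then decide ((⟨r-1, h⟩ : Fin k) < γ ⟨r-1, h⟩) else false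

def Dof {k : ℕ} (γ : Equiv.Perm (Fin k)) : ℕ → Bool := fun r =>
  if h : 1 ≤ r ∧ r < k then decide (γ ⟨r, h.2⟩ < γ ⟨r-1, by omega⟩) else false

lemma aof_succ {k : ℕ} (γ : Equiv.Perm (Fin k)) (j : Fin k) :
    aof γ ((j : ℕ) + 1) = decide (j < γ j) := by
  unfold aof
  rw [dif_pos (by simp [j.2] : (j:ℕ)+1-1 < k)]
  have he : (⟨(j:ℕ)+1-1, by simp [j.2]⟩ : Fin k) = j := Fin.ext (by simp)
  rw [he]

lemma Dof_succ {k : ℕ} (γ : Equiv.Perm (Fin k)) (j : Fin k) (h : (j : ℕ) + 1 < k) :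
    Dof γ ((j : ℕ) + 1) = decide (γ ⟨(j:ℕ)+1, h⟩ < γ j) := by
  unfold Dof
  rw [dif_pos ⟨by omega, h⟩]
  have he : (⟨(j:ℕ)+1-1, by omega⟩ : Fin k) = j := Fin.ext (by simp)
  rw [he]

lemma compat_of_derangement {k : ℕ} (γ : Equiv.Perm (Fin k)) (hγ : ∀ i, γ i ≠ i) :
    Compat (aof γ) (Dof γ) k := by
  intro j hj1 hj2
  obtain ⟨i, rfl⟩ : ∃ i : ℕ, j = i + 1 := ⟨j - 1, by omega⟩
  have hik : i + 1 < k := by omega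
  have hik' : i < k := by omega
  set x : Fin k := ⟨i, hik'⟩ with hx
  set y : Fin k := ⟨i+1, hik⟩ with hy
  have hxy : (x : ℕ) + 1 = i + 1 := by simp [hx]
  have ha1 : aof γ (i+1) = decide (x < γ x) := by
    have := aof_succ γ x; rwa [hxy] at this
  have ha2 : aof γ (i+1+1) = decide (y < γ y) := by
    have := aof_succ γ y; simpa [hy] using this
  have hd : Dof γ (i+1) = decide (γ y < γ x) := by
    have := Dof_succ γ x (by simpa [hx] using hik)
    simpa [hx, hy] using this
  rw [ha1, ha2, hd]
  constructor
  · rintro ⟨h1, h2⟩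
    have hxlt : x < γ x := by simpa using h1
    have hyge : ¬ (y < γ y) := by simpa using h2
    have hyne : γ y ≠ y := hγ y
    have hylt : γ y < y := lt_of_le_of_ne (not_lt.mp hyge) hyne
    have : γ y < γ x := by
      have h3 : (γ y : ℕ) < (y : ℕ) := hylt
      have h4 : (x : ℕ) < (γ x : ℕ) := hxlt
      have h5 : (y:ℕ) = (x:ℕ)+1 := by simp [hx, hy]
      have hne : γ y ≠ γ x := fun hc => by
        have := γ.injective hc
        exact absurd (congrArg Fin.val this) (by simp [hx, hy])
      have : (γ y : ℕ) < (γ x : ℕ) := by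
        rcases Nat.lt_or_ge (γ y : ℕ) (γ x : ℕ) with h | h
        · exact h
        · exfalso
          have : (γ y : ℕ) ≤ (x:ℕ) := by omega
          omega
      exact this
    simpa using this
  · rintro ⟨h1, h2⟩
    have hxge : ¬ (x < γ x) := by simpa using h1
    have hylt : y < γ y := by simpa using h2
    have hxlt : γ x < x := lt_of_le_of_ne (not_lt.mp hxge) (hγ x)
    have : ¬ (γ y < γ x) := by
      have h3 : (γ x : ℕ) < (x : ℕ) := hxlt
      have h4 : (y : ℕ) < (γ y : ℕ) := hylt
      have h5 : (y:ℕ) = (x:ℕ)+1 := by simp [hx, hy]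
      intro hc
      have : (γ y : ℕ) < (γ x : ℕ) := hc
      omega
    simpa using this

lemma maj_eq_sD {k : ℕ} (γ : Equiv.Perm (Fin k)) : maj γ = sD (Dof γ) k := by
  rcases Nat.eq_zero_or_pos k with rfl | hk
  · rw [maj, sD, Finset.range_zero, Finset.sum_empty, Finset.sum_empty]
  · obtain ⟨m, rfl⟩ : ∃ m, k = m + 1 := ⟨k-1, by omega⟩
    rw [maj, sD, Finset.sum_range_succ, Finset.sum_range_succ']
    rw [dif_neg (by omega : ¬ (m + 1 < m + 1)), add_zero]
    have h2 : (if Dof γ 0 = true then (0:ℕ) else 0) = 0 := by split_ifs <;> rfl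
    rw [h2, add_zero]
    apply Finset.sum_congr rfl
    intro i hi
    have him : i < m := Finset.mem_range.mp hi
    have hik : i + 1 < m + 1 := by omega
    rw [dif_pos hik]
    have := Dof_succ γ ⟨i, by omega⟩ (by simpa using hik)
    simp only [Fin.val_mk] at this
    rw [this]
    simp only [decide_eq_true_eq]

lemma exists_emb {n k : ℕ} {S : Finset (Fin n)} (hS : S.card = k) {x : Fin n} (hx : x ∈ S) :
    ∃ j : Fin k, S.orderEmbOfFin hS j = x := by
  have h2 : x ∈ Set.range (S.orderEmbOfFin hS) := by
    rw [Finset.range_orderEmbOfFin]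
    exact Finset.mem_coe.mpr hx
  exact h2

lemma mem_map_val {n : ℕ} (S : Finset (Fin n)) (i : ℕ) (hi : i < n) :
    i ∈ S.map Fin.valEmbedding ↔ (⟨i, hi⟩ : Fin n) ∈ S := by
  rw [Finset.mem_map]
  constructor
  · rintro ⟨x, hx, rfl⟩
    simpa [Fin.eta] using hx
  · intro h
    exact ⟨⟨i, hi⟩, h, rfl⟩

lemma not_mem_map_val_of_ge {n : ℕ} (S : Finset (Fin n)) (i : ℕ) (hi : n ≤ i) :
    i ∉ S.map Fin.valEmbedding := by
  rw [Finset.mem_map]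
  rintro ⟨x, _, rfl⟩
  exact absurd x.2 (by simp [Fin.valEmbedding] at *; omega)

lemma rk_succ_of_mem {T : Finset ℕ} {i : ℕ} (h : i ∈ T) : rk T (i+1) = rk T i + 1 := by
  unfold rk
  have : T.filter (· < i + 1) = insert i (T.filter (· < i)) := by
    ext x
    simp only [Finset.mem_filter, Finset.mem_insert]
    constructor
    · rintro ⟨hx, hlt⟩
      rcases Nat.lt_or_ge x i with h' | h'
      · exact Or.inr ⟨hx, h'⟩
      · exact Or.inl (by omega)
    · rintro (rfl | ⟨hx, hlt⟩)
      · exact ⟨h, by omega⟩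
      · exact ⟨hx, by omega⟩
  rw [this, Finset.card_insert_of_notMem (by simp)]

lemma rk_map_succ {n k : ℕ} (S : Finset (Fin n)) (hS : S.card = k) (j : Fin k) :
    rk (S.map Fin.valEmbedding) (((S.orderEmbOfFin hS j) : ℕ) + 1) = (j : ℕ) + 1 := by
  set e := S.orderEmbOfFin hS with he
  set v : ℕ := (e j : ℕ) with hv
  have h1 : (S.map Fin.valEmbedding).filter (· < v+1)
      = (S.filter (fun x => x.val < v+1)).map Fin.valEmbedding := by
    ext y
    simp only [Finset.mem_filter, Finset.mem_map, Fin.valEmbedding_apply]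
    constructor
    · rintro ⟨⟨x, hx, rfl⟩, hy⟩
      exact ⟨x, ⟨hx, hy⟩, rfl⟩
    · rintro ⟨x, ⟨hx, hy⟩, rfl⟩
      exact ⟨⟨x, hx, rfl⟩, hy⟩
  have h2 : S.filter (fun x => x.val < v+1) = S.filter (· ≤ e j) := by
    apply Finset.filter_congr
    intro x _
    simp only [Fin.le_def, ← hv]
    omega
  have h3 : S.filter (· ≤ e j) = (Finset.Iic j).image (fun i : Fin k => e i) := by
    ext x
    simp only [Finset.mem_filter, Finset.mem_image, Finset.mem_Iic]
    constructor
    · rintro ⟨hx, hle⟩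
      obtain ⟨i, rfl⟩ := exists_emb hS hx
      exact ⟨i, (OrderEmbedding.le_iff_le e).mp hle, rfl⟩
    · rintro ⟨i, hi, rfl⟩
      exact ⟨Finset.orderEmbOfFin_mem S hS i, (OrderEmbedding.le_iff_le e).mpr hi⟩
  rw [rk, h1, Finset.card_map, h2, h3,
    Finset.card_image_of_injective _ e.injective, Fin.card_Iic]

lemma maj_eq_fs {n k : ℕ} (γ : Equiv.Perm (Fin k)) (hγ : ∀ i, γ i ≠ i)
    (σ : Equiv.Perm (Fin n)) (S : Finset (Fin n)) (hS : S.card = k)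
    (hfix : ∀ x, x ∉ S → σ x = x)
    (hkey : ∀ j : Fin k, σ (S.orderEmbOfFin hS j) = S.orderEmbOfFin hS (γ j)) :
    maj σ = fs (aof γ) (Dof γ) n (S.map Fin.valEmbedding) := by
  rcases Nat.eq_zero_or_pos n with rfl | hn
  · rw [maj, fs, Finset.range_zero, Finset.sum_empty, Finset.sum_empty]
  obtain ⟨m, rfl⟩ : ∃ m, n = m + 1 := ⟨n-1, by omega⟩
  set a := aof γ with ha
  set D := Dof γ with hD
  set T := S.map Fin.valEmbedding with hT
  set e := S.orderEmbOfFin hS with he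
  rw [maj, fs, Finset.sum_range_succ, Finset.sum_range_succ' (fun i => wt a D T i)]
  rw [dif_neg (by omega : ¬ (m+1 < m+1)), add_zero, wt_zero, add_zero]
  apply Finset.sum_congr rfl
  intro i hi
  have him : i < m := Finset.mem_range.mp hi
  have h1 : i + 1 < m + 1 := by omega
  have h0 : i < m + 1 := by omega
  rw [dif_pos h1]
  by_cases hA : (⟨i, h0⟩ : Fin (m+1)) ∈ S <;> by_cases hB : (⟨i+1, h1⟩ : Fin (m+1)) ∈ S
  · -- both in S
    obtain ⟨j, hj⟩ := exists_emb hS hA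
    obtain ⟨j', hj'⟩ := exists_emb hS hB
    have hvj : (e j : ℕ) = i := congrArg Fin.val hj
    have hvj' : (e j' : ℕ) = i + 1 := congrArg Fin.val hj'
    have hrk1 : rk T (i+1) = (j : ℕ) + 1 := by
      have := rk_map_succ S hS j; rw [← he, hvj] at this; exact this
    have hrk2 : rk T (i+2) = (j' : ℕ) + 1 := by
      have := rk_map_succ S hS j'; rw [← he, hvj'] at this; exact this
    have hiT : i + 1 ∈ T := (mem_map_val S (i+1) h1).mpr hB
    have hiT' : i ∈ T := (mem_map_val S i h0).mpr hA
    have hrk3 : rk T (i+2) = rk T (i+1) + 1 := rk_succ_of_mem hiT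
    have hjj' : (j' : ℕ) = (j : ℕ) + 1 := by omega
    have hj'k : (j : ℕ) + 1 < k := hjj' ▸ j'.2
    have hDval : D ((j:ℕ)+1) = decide (γ j' < γ j) := by
      rw [hD, Dof_succ γ j hj'k]
      have hmk : (⟨(j:ℕ)+1, hj'k⟩ : Fin k) = j' := Fin.ext (by simp only [Fin.val_mk]; omega)
      rw [hmk]
    have hw : wt a D T (i+1) = if D ((j:ℕ)+1) = true then i+1 else 0 := by
      unfold wt
      simp only [Nat.add_sub_cancel]
      rw [if_pos hiT', if_pos hiT, hrk1]
    rw [hw, hDval, ← hj', ← hj, hkey j', hkey j]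
    have hlt : (e (γ j') < e (γ j)) ↔ (γ j' < γ j) := e.lt_iff_lt
    split_ifs with hc1 hc2 hc2
    · rfl
    · exact absurd (decide_eq_true (hlt.mp hc1)) (by simp [hc2])
    · exact absurd (hlt.mpr (of_decide_eq_true hc2)) hc1
    · rfl
  · -- i ∈ S, i+1 ∉ S
    obtain ⟨j, hj⟩ := exists_emb hS hA
    have hvj : (e j : ℕ) = i := congrArg Fin.val hj
    have hrk1 : rk T (i+1) = (j : ℕ) + 1 := by
      have := rk_map_succ S hS j; rw [← he, hvj] at this; exact this
    have hiT' : i ∈ T := (mem_map_val S i h0).mpr hA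
    have hiTn : i + 1 ∉ T := fun hc => hB ((mem_map_val S (i+1) h1).mp hc)
    have haval : a ((j:ℕ)+1) = decide (j < γ j) := by rw [ha]; exact aof_succ γ j
    have hw : wt a D T (i+1) = if a ((j:ℕ)+1) = true then i+1 else 0 := by
      unfold wt
      simp only [Nat.add_sub_cancel]
      rw [if_pos hiT', if_neg hiTn, hrk1]
    rw [hw, haval, ← hj, hkey j, hfix _ hB]
    have hiff : ((⟨i+1, h1⟩ : Fin (m+1)) < e (γ j)) ↔ (j < γ j) := by
      constructor
      · intro h
        have h2 : e j < e (γ j) := by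
          rw [hj]
          exact lt_trans (Fin.mk_lt_mk.mpr (by omega)) h
        exact e.lt_iff_lt.mp h2
      · intro h
        have h2 : e j < e (γ j) := e.lt_iff_lt.mpr h
        rw [hj] at h2
        have h3 : i < (e (γ j) : ℕ) := h2
        have h4 : e (γ j) ∈ S := Finset.orderEmbOfFin_mem S hS (γ j)
        have h6 : (e (γ j) : ℕ) ≠ i + 1 := fun hc => hB (by
          rw [show (⟨i+1, h1⟩ : Fin (m+1)) = e (γ j) from (Fin.ext hc.symm)]
          exact h4)
        exact Fin.lt_def.mpr (by simp only [Fin.val_mk]; omega)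
    split_ifs with hc1 hc2 hc2
    · rfl
    · exact absurd (decide_eq_true (hiff.mp hc1)) (by simp [hc2])
    · exact absurd (hiff.mpr (of_decide_eq_true hc2)) hc1
    · rfl
  · -- i ∉ S, i+1 ∈ S
    obtain ⟨j', hj'⟩ := exists_emb hS hB
    have hvj' : (e j' : ℕ) = i + 1 := congrArg Fin.val hj'
    have hrk2 : rk T (i+1+1) = (j' : ℕ) + 1 := by
      have := rk_map_succ S hS j'; rw [← he, hvj'] at this; exact this
    have hiTn : i ∉ T := fun hc => hA ((mem_map_val S i h0).mp hc)
    have hiT : i + 1 ∈ T := (mem_map_val S (i+1) h1).mpr hB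
    have haval : a ((j':ℕ)+1) = decide (j' < γ j') := by rw [ha]; exact aof_succ γ j'
    have hw : wt a D T (i+1) = if a ((j':ℕ)+1) = true then 0 else i+1 := by
      unfold wt
      simp only [Nat.add_sub_cancel]
      rw [if_neg hiTn, if_pos hiT, hrk2]
    rw [hw, haval, ← hj', hkey j', hfix _ hA]
    rcases lt_or_gt_of_ne (hγ j') with hlt | hgt
    · -- γ j' < j' : descent
      have h2 : e (γ j') < e j' := e.lt_iff_lt.mpr hlt
      rw [hj'] at h2
      have h3 : (e (γ j') : ℕ) < i + 1 := h2
      have h4 : e (γ j') ∈ S := Finset.orderEmbOfFin_mem S hS (γ j')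
      have h5 : (e (γ j') : ℕ) ≠ i := by
        intro hc
        exact hA (by rwa [show (⟨i, h0⟩ : Fin (m+1)) = e (γ j') from (Fin.ext hc.symm)])
      have h6 : e (γ j') < (⟨i, h0⟩ : Fin (m+1)) := by
        rw [Fin.lt_def]
        simp only [Fin.val_mk]
        omega
      rw [if_pos h6, if_neg (by simp only [decide_eq_true_eq]; exact fun hc => absurd hc (not_lt.mpr (le_of_lt hlt)))]
    · -- j' < γ j' : no descent
      have h2 : e j' < e (γ j') := e.lt_iff_lt.mpr hgt
      rw [hj'] at h2
      have h3 : i + 1 < (e (γ j') : ℕ) := h2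
      have h6 : ¬ (e (γ j') < (⟨i, h0⟩ : Fin (m+1))) := by
        rw [Fin.lt_def]
        simp only [Fin.val_mk]
        omega
      rw [if_neg h6, if_pos (by simpa using hgt)]
  · -- neither
    have hiTn : i ∉ T := fun hc => hA ((mem_map_val S i h0).mp hc)
    have hiTn' : i + 1 ∉ T := fun hc => hB ((mem_map_val S (i+1) h1).mp hc)
    have hw : wt a D T (i+1) = 0 := by
      unfold wt
      simp only [Nat.add_sub_cancel]
      rw [if_neg hiTn, if_neg hiTn']
    rw [hw, hfix _ hA, hfix _ hB]
    rw [if_neg (by rw [Fin.lt_def]; simp)]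

/-! ### extendDomain construction and dp extraction -/

lemma orderEmb_cast {n k : ℕ} (S : Finset (Fin n)) (h : S.card = k) (i : Fin S.card) :
    (((S.orderIsoOfFin rfl).toEquiv i : {x // x ∈ S}) : Fin n)
      = S.orderEmbOfFin h (finCongr h i) := by
  show ((S.orderIsoOfFin rfl i : {x // x ∈ S}) : Fin n) = _
  rw [Finset.coe_orderIsoOfFin_apply]
  exact Finset.orderEmbOfFin_eq_orderEmbOfFin_iff.mpr rfl

lemma nonfixed_apply_eq {n : ℕ} {σ : Equiv.Perm (Fin n)} {x : Fin n} (h : x ∉ nonfixed σ) :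
    σ x = x := by
  by_contra hc
  exact h (Finset.mem_filter.mpr ⟨Finset.mem_univ x, hc⟩)

lemma key_of_dp {n k : ℕ} (γ : Equiv.Perm (Fin k)) {σ : Equiv.Perm (Fin n)}
    (h : (nonfixed σ).card = k)
    (hdp : (finCongr h).permCongr (dp σ) = γ) (j : Fin k) :
    σ ((nonfixed σ).orderEmbOfFin h j) = (nonfixed σ).orderEmbOfFin h (γ j) := by
  have h1 : dp σ ((finCongr h).symm j) = (finCongr h).symm (γ j) := by
    rw [← hdp]
    simp [Equiv.permCongr_apply]
  rw [dp] at h1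
  simp only [Equiv.permCongr_apply, Equiv.symm_symm] at h1
  have h3 := congrArg (((nonfixed σ).orderIsoOfFin rfl).toEquiv) h1
  rw [Equiv.apply_symm_apply] at h3
  have h4 := congrArg Subtype.val h3
  simp only [Equiv.Perm.subtypePerm_apply] at h4
  rw [orderEmb_cast (nonfixed σ) h ((finCongr h).symm j),
    orderEmb_cast (nonfixed σ) h ((finCongr h).symm (γ j)),
    Equiv.apply_symm_apply, Equiv.apply_symm_apply] at h4
  exact h4

lemma dp_eq_of_key {n k : ℕ} (γ : Equiv.Perm (Fin k)) {σ : Equiv.Perm (Fin n)}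
    (h : (nonfixed σ).card = k)
    (hkey : ∀ j : Fin k,
      σ ((nonfixed σ).orderEmbOfFin h j) = (nonfixed σ).orderEmbOfFin h (γ j)) :
    (finCongr h).permCongr (dp σ) = γ := by
  apply Equiv.ext
  intro j
  show (finCongr h) (dp σ ((finCongr h).symm j)) = γ j
  rw [dp]
  simp only [Equiv.permCongr_apply, Equiv.symm_symm]
  have h3 : (σ.subtypePerm (by
        intro x
        simp [nonfixed, not_iff_not, Equiv.apply_eq_iff_eq]) :
        Equiv.Perm {x // x ∈ nonfixed σ})
        (((nonfixed σ).orderIsoOfFin rfl).toEquiv ((finCongr h).symm j))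
      = ((nonfixed σ).orderIsoOfFin rfl).toEquiv ((finCongr h).symm (γ j)) := by
    apply Subtype.ext
    simp only [Equiv.Perm.subtypePerm_apply]
    have e1 := orderEmb_cast (nonfixed σ) h ((finCongr h).symm j)
    have e2 := orderEmb_cast (nonfixed σ) h ((finCongr h).symm (γ j))
    rw [Equiv.apply_symm_apply] at e1 e2
    calc σ (((((nonfixed σ).orderIsoOfFin rfl).toEquiv ((finCongr h).symm j) : _)) : Fin n)
        = σ ((nonfixed σ).orderEmbOfFin h j) := by rw [e1]
      _ = (nonfixed σ).orderEmbOfFin h (γ j) := hkey j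
      _ = _ := e2.symm
  rw [h3]
  simp

lemma construct_apply_mem {n k : ℕ} (γ : Equiv.Perm (Fin k)) (S : Finset (Fin n))
    (hS : S.card = k) (j : Fin k) :
    (γ.extendDomain (S.orderIsoOfFin hS).toEquiv) (S.orderEmbOfFin hS j)
      = S.orderEmbOfFin hS (γ j) := by
  have hmem : (S.orderEmbOfFin hS j : Fin n) ∈ S := Finset.orderEmbOfFin_mem S hS j
  rw [Equiv.Perm.extendDomain_apply_subtype _ _ hmem]
  have h1 : ((S.orderIsoOfFin hS).toEquiv.symm ⟨S.orderEmbOfFin hS j, hmem⟩) = j := by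
    apply ((S.orderIsoOfFin hS).toEquiv).injective
    rw [Equiv.apply_symm_apply]
    apply Subtype.ext
    exact (Finset.coe_orderIsoOfFin_apply S hS j).symm
  rw [h1]
  exact Finset.coe_orderIsoOfFin_apply S hS (γ j)

lemma construct_apply_not_mem {n k : ℕ} (γ : Equiv.Perm (Fin k)) (S : Finset (Fin n))
    (hS : S.card = k) {x : Fin n} (hx : x ∉ S) :
    (γ.extendDomain (S.orderIsoOfFin hS).toEquiv) x = x :=
  Equiv.Perm.extendDomain_apply_not_subtype _ _ hx

lemma nonfixed_construct {n k : ℕ} (γ : Equiv.Perm (Fin k)) (hγ : ∀ i, γ i ≠ i)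
    (S : Finset (Fin n)) (hS : S.card = k) :
    nonfixed (γ.extendDomain (S.orderIsoOfFin hS).toEquiv) = S := by
  ext x
  rw [nonfixed, Finset.mem_filter]
  constructor
  · rintro ⟨-, hne⟩
    by_contra hx
    exact hne (construct_apply_not_mem γ S hS hx)
  · intro hx
    refine ⟨Finset.mem_univ x, ?_⟩
    obtain ⟨j, rfl⟩ := exists_emb hS hx
    rw [construct_apply_mem γ S hS j]
    intro hc
    exact hγ j (((S.orderEmbOfFin hS).injective hc))

lemma orderEmbOfFin_set_congr {n k : ℕ} {S S' : Finset (Fin n)} (hSS : S = S')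
    (h : S.card = k) (h' : S'.card = k) (j : Fin k) :
    S.orderEmbOfFin h j = S'.orderEmbOfFin h' j := by subst hSS; rfl

lemma construct_congr {n k : ℕ} (γ : Equiv.Perm (Fin k)) {S S' : Finset (Fin n)}
    (hSS : S = S') (h : S.card = k) (h' : S'.card = k) :
    γ.extendDomain ((S.orderIsoOfFin h).toEquiv)
      = γ.extendDomain ((S'.orderIsoOfFin h').toEquiv) := by subst hSS; rfl

lemma attachFin_map_val {n : ℕ} (S : Finset (Fin n))
    (h : ∀ m ∈ S.map Fin.valEmbedding, m < n) :
    (S.map Fin.valEmbedding).attachFin h = S := by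
  ext x
  rw [Finset.mem_attachFin]
  exact mem_map_val S x.val x.2 |>.trans (by rw [Fin.eta])

lemma map_val_attachFin {n : ℕ} (T : Finset ℕ) (h : ∀ m ∈ T, m < n) :
    (T.attachFin h).map Fin.valEmbedding = T := by
  ext y
  rw [Finset.mem_map]
  constructor
  · rintro ⟨x, hx, rfl⟩
    exact (Finset.mem_attachFin h).mp hx
  · intro hy
    exact ⟨⟨y, h y hy⟩, (Finset.mem_attachFin h).mpr hy, rfl⟩


open scoped Classical in
/-- Wachs' lemma: for a derangement `γ ∈ D_k` and `n ≥ k`,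
`∑_{σ ∈ S_n, dp σ = γ} q^{maj σ} = q^{maj γ} · [n choose k]_q`, as an identity in `ℚ(q)`. -/
theorem stmt7 {k : ℕ} (γ : Equiv.Perm (Fin k)) (hγ : ∀ i, γ i ≠ i) (n : ℕ) (hn : k ≤ n) :
    ∑ σ ∈ Finset.univ.filter (fun σ : Equiv.Perm (Fin n) =>
        ∃ h : (nonfixed σ).card = k, (finCongr h).permCongr (dp σ) = γ),
      (RatFunc.X : RatFunc ℚ) ^ maj σ
      = RatFunc.X ^ maj γ * qBinom RatFunc.X n k := by
  have hcomp := compat_of_derangement γ hγ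
  have hcore := core_sum n k (aof γ) (Dof γ) hcomp hn
  rw [maj_eq_sD γ, show qBinom RatFunc.X n k = B n k from (B_eq n k hn).symm, ← hcore]
  refine Finset.sum_bij' (fun σ _ => (nonfixed σ).map Fin.valEmbedding)
    (fun T hT => γ.extendDomain ((Finset.orderIsoOfFin
      (T.attachFin (fun m hm => Finset.mem_range.mp ((Finset.mem_powersetCard.mp hT).1 hm)))
      (by rw [Finset.card_attachFin]; exact (Finset.mem_powersetCard.mp hT).2)).toEquiv))
    ?_ ?_ ?_ ?_ ?_
  · -- hi : image lands in powersetCard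
    intro σ hσ
    obtain ⟨h, -⟩ := (Finset.mem_filter.mp hσ).2
    rw [Finset.mem_powersetCard]
    constructor
    · intro x hx
      rw [Finset.mem_map] at hx
      obtain ⟨y, -, rfl⟩ := hx
      exact Finset.mem_range.mpr y.2
    · rw [Finset.card_map, h]
  · -- hj : constructed perm is in the filter set
    intro T hT
    rw [Finset.mem_filter]
    refine ⟨Finset.mem_univ _, ?_⟩
    set S := T.attachFin (fun m hm => Finset.mem_range.mp ((Finset.mem_powersetCard.mp hT).1 hm)) with hSdef
    have hScard : S.card = k := by
      rw [hSdef, Finset.card_attachFin]; exact (Finset.mem_powersetCard.mp hT).2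
    set σ := γ.extendDomain ((Finset.orderIsoOfFin S hScard).toEquiv) with hσdef
    have hnf : nonfixed σ = S := nonfixed_construct γ hγ S hScard
    have hcard : (nonfixed σ).card = k := by rw [hnf]; exact hScard
    refine ⟨hcard, ?_⟩
    apply dp_eq_of_key γ hcard
    intro j
    have hkey := construct_apply_mem γ S hScard j
    rw [orderEmbOfFin_set_congr hnf hcard hScard j,
      orderEmbOfFin_set_congr hnf hcard hScard (γ j)]
    exact hkey
  · -- left_inv
    intro σ hσ
    obtain ⟨h, hdp⟩ := (Finset.mem_filter.mp hσ).2
    have hbd : ∀ m ∈ (nonfixed σ).map Fin.valEmbedding, m < n := fun m hm => by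
      rw [Finset.mem_map] at hm
      obtain ⟨y, -, rfl⟩ := hm
      exact y.2
    have hSeq : ((nonfixed σ).map Fin.valEmbedding).attachFin hbd = nonfixed σ :=
      attachFin_map_val _ _
    have hc1 : (((nonfixed σ).map Fin.valEmbedding).attachFin hbd).card = k := by
      rw [hSeq]; exact h
    refine Eq.trans (construct_congr γ hSeq hc1 h) ?_
    apply Equiv.ext
    intro x
    by_cases hx : x ∈ nonfixed σ
    · obtain ⟨j, rfl⟩ := exists_emb h hx
      rw [construct_apply_mem γ _ h j]
      exact (key_of_dp γ h hdp j).symm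
    · rw [construct_apply_not_mem γ _ h hx, nonfixed_apply_eq hx]
  · -- right_inv
    intro T hT
    have hbd : ∀ m ∈ T, m < n :=
      fun m hm => Finset.mem_range.mp ((Finset.mem_powersetCard.mp hT).1 hm)
    have hScard : (T.attachFin hbd).card = k := by
      rw [Finset.card_attachFin]; exact (Finset.mem_powersetCard.mp hT).2
    have h2 := congrArg (fun (S : Finset (Fin n)) => S.map Fin.valEmbedding)
      (nonfixed_construct γ hγ (T.attachFin hbd) hScard)
    exact h2.trans (map_val_attachFin T hbd)
  · -- values
    intro σ hσ
    obtain ⟨h, hdp⟩ := (Finset.mem_filter.mp hσ).2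
    rw [maj_eq_fs γ hγ σ (nonfixed σ) h (fun x hx => nonfixed_apply_eq hx)
      (key_of_dp γ h hdp)]
end

section
/- For odd r with 1 \le r \le n, the Charney-Davis quantity of the rank-r uniform matroid Chow ring equals \sum_{k=0}^{(r-1)/2} \binom{n}{2k} E_{2k}; equivalently, 1 + \sum_{\mathbf{r}} (-1)^{|\mathbf{r}|} \prod_{i=1}^{|\mathbf{r}|} \binom{n - r_{i-1}}{r_i - r_{i-1}}, summed over all tuples 0 = r_0 < r_1 < \cdots < r_{|\mathbf{r}|} < r with all differences r_i - r_{i-1} even, equals \sum_{k=0}^{(r-1)/2} \binom{n}{2k} E_{2k}. -/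
/-- The previous value `r_{i-1}` of a tuple `0 = r_0 < r_1 < ⋯ < r_m` encoded by
`f : Fin m → Fin r` (so `r_i = f (i-1)` for `i ≥ 1`): `prevVal f i = 0` if `i = 0` and
`f (i-1)` otherwise. -/
def prevVal {m r : ℕ} (f : Fin m → Fin r) (i : Fin m) : ℕ :=
  if (i : ℕ) = 0 then 0
  else (f ⟨(i : ℕ) - 1, Nat.lt_of_le_of_lt (Nat.sub_le _ _) i.isLt⟩ : ℕ)

open scoped Classical in
/-- `1 + ∑_𝐫 (-1)^{|𝐫|} ∏_i C(n - r_{i-1}, r_i - r_{i-1})`, summed over all nonempty strictly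
increasing tuples `0 = r_0 < r_1 < ⋯ < r_m < r` with all consecutive differences even;
this is the Charney–Davis quantity of `A(U_{n,r})` obtained by substituting `t = -1` in the
Feichtner–Yuzvinsky formula. -/
noncomputable def cdLHS (n r : ℕ) : ℚ :=
  1 + ∑ m ∈ Finset.Icc 1 r, ∑ f ∈ Finset.univ.filter
      (fun f : Fin m → Fin r => StrictMono f ∧
        (∀ i, prevVal f i < (f i : ℕ)) ∧
        (∀ i, Even ((f i : ℕ) - prevVal f i))),
    (-1 : ℚ) ^ m * ∏ i, (((n - prevVal f i).choose ((f i : ℕ) - prevVal f i) : ℕ) : ℚ)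

open Finset

namespace CDaux

/-- previous element of `x` in `s`, defaulting to `p`. -/
def P (p : ℕ) (s : Finset ℕ) (x : ℕ) : ℕ := WithBot.unbotD p ((s.filter fun y => y < x).max)

/-- the weight of a finset of "milestones", with initial previous value `p`. -/
def W (n p : ℕ) (s : Finset ℕ) : ℚ :=
  (-1 : ℚ) ^ s.card * ∏ x ∈ s, ((n - P p s x).choose (x - P p s x) : ℚ)

/-- even numbers in `[a, r-1]`. -/
def B (r a : ℕ) : Finset ℕ := (Finset.Icc a (r - 1)).filter fun x => Even x

def U (n r p a : ℕ) : ℚ := ∑ s ∈ (B r a).powerset, W n p s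

def D (E : ℕ → ℚ) (m c : ℕ) : ℚ :=
  ∑ i ∈ (Finset.range c).filter (fun x => Even x), (m.choose i : ℚ) * E (m - i)

def G (E : ℕ → ℚ) (n r p a : ℕ) : ℚ :=
  1 + ∑ j ∈ B r a, ((n - p).choose (j - p) : ℚ) * D E (j - p) (a - p)

section secant

variable {E : ℕ → ℚ}
  (hE : (PowerSeries.mk fun m => if m % 2 = 0 then E m / (m.factorial : ℚ) else 0) * coshS = 1)

include hE

lemma E_zero : E 0 = 1 := by
  have h := congrArg (PowerSeries.constantCoeff) hE
  simpa [coshS] using h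

lemma secant1 (m : ℕ) (hm : m % 2 = 0) (h0 : m ≠ 0) :
    ∑ i ∈ (Finset.range (m + 1)).filter (fun x => Even x), (m.choose i : ℚ) * E i = 0 := by
  have h := congrArg (PowerSeries.coeff m) hE
  rw [PowerSeries.coeff_mul, Finset.Nat.sum_antidiagonal_eq_sum_range_succ_mk] at h
  simp only [PowerSeries.coeff_mk, coshS, PowerSeries.coeff_one, if_neg h0] at h
  rw [Finset.sum_filter]
  have key : ∀ i ∈ Finset.range (m + 1),
      (if Even i then (m.choose i : ℚ) * E i else 0)
        = (m.factorial : ℚ) * ((if i % 2 = 0 then E i / (i.factorial : ℚ) else 0) *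
            (if (m - i) % 2 = 0 then (((m - i).factorial : ℚ))⁻¹ else 0)) := by
    intro i hi
    rw [Finset.mem_range] at hi
    have hile : i ≤ m := by omega
    by_cases hev : Even i
    · have h2 : i % 2 = 0 := Nat.even_iff.1 hev
      have h3 : (m - i) % 2 = 0 := by omega
      rw [if_pos hev, if_pos h2, if_pos h3, Nat.cast_choose ℚ hile]
      have hi0 : (i.factorial : ℚ) ≠ 0 := by exact_mod_cast i.factorial_ne_zero
      have hmi0 : ((m - i).factorial : ℚ) ≠ 0 := by exact_mod_cast (m - i).factorial_ne_zero
      field_simp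
    · have h2 : ¬ (i % 2 = 0) := by rwa [← Nat.even_iff]
      rw [if_neg hev, if_neg h2]
      ring
  rw [Finset.sum_congr rfl key, ← Finset.mul_sum, h, mul_zero]

lemma secant2 (m : ℕ) (hm : m % 2 = 0) (h0 : m ≠ 0) :
    ∑ i ∈ (Finset.range (m + 1)).filter (fun x => Even x),
      (m.choose i : ℚ) * E (m - i) = 0 := by
  rw [← secant1 hE m hm h0]
  apply Finset.sum_bij' (i := fun x _ => m - x) (j := fun x _ => m - x)
  · intro a ha
    simp only [Finset.mem_filter, Finset.mem_range, Nat.even_iff] at ha ⊢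
    omega
  · intro a ha
    simp only [Finset.mem_filter, Finset.mem_range, Nat.even_iff] at ha ⊢
    omega
  · intro a ha
    simp only [Finset.mem_filter, Finset.mem_range] at ha
    omega
  · intro a ha
    simp only [Finset.mem_filter, Finset.mem_range] at ha
    omega
  · intro a ha
    simp only [Finset.mem_filter, Finset.mem_range] at ha
    have hle : a ≤ m := by omega
    rw [Nat.choose_symm hle]

lemma D_self (m : ℕ) (hm : m % 2 = 0) (h0 : m ≠ 0) : D E m m = -1 := by
  have h := secant2 hE m hm h0
  have hsplit : (Finset.range (m + 1)).filter (fun x => Even x)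
      = insert m ((Finset.range m).filter (fun x => Even x)) := by
    ext x
    simp only [Finset.mem_filter, Finset.mem_range, Finset.mem_insert, Nat.even_iff]
    omega
  rw [hsplit, Finset.sum_insert (by simp)] at h
  simp only [Nat.choose_self, Nat.sub_self, Nat.cast_one, one_mul, E_zero hE] at h
  unfold D
  linarith

end secant

lemma D_two (E : ℕ → ℚ) (m : ℕ) : D E m 2 = E m := by
  have h : (Finset.range 2).filter (fun x => Even x) = {0} := by decide
  simp [D, h]

lemma D_step (E : ℕ → ℚ) (m c : ℕ) (hc : Even c) :
    D E m (c + 2) = D E m c + (m.choose c : ℚ) * E (m - c) := by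
  have h : (Finset.range (c + 2)).filter (fun x => Even x)
      = insert c ((Finset.range c).filter (fun x => Even x)) := by
    ext x
    rw [Nat.even_iff] at hc
    simp only [Finset.mem_filter, Finset.mem_range, Finset.mem_insert, Nat.even_iff]
    omega
  rw [D, h, Finset.sum_insert (by simp), D]
  ring

lemma B_empty {r a : ℕ} (h : r ≤ a) (hr : 1 ≤ r) : B r a = ∅ := by
  unfold B
  rw [Finset.Icc_eq_empty (by omega), Finset.filter_empty]

lemma W_empty (n p : ℕ) : W n p ∅ = 1 := by simp [W]

lemma U_base {n r p a : ℕ} (h : r ≤ a) (hr : 1 ≤ r) : U n r p a = 1 := by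
  rw [U, B_empty h hr]
  simp [W_empty]

lemma G_base {E : ℕ → ℚ} {n r p a : ℕ} (h : r ≤ a) (hr : 1 ≤ r) : G E n r p a = 1 := by
  rw [G, B_empty h hr]
  simp

lemma P_insert_self (n p a : ℕ) (s : Finset ℕ) (hs : ∀ x ∈ s, a < x) :
    P p (insert a s) a = p := by
  have h : (insert a s).filter (fun y => y < a) = ∅ := by
    ext x
    simp only [Finset.mem_filter, Finset.mem_insert, Finset.notMem_empty, iff_false, not_and]
    rintro (rfl | hx)
    · omega
    · have := hs x hx; omega
  simp [P, h]

lemma P_insert_of_mem (p a x : ℕ) (s : Finset ℕ) (hx : x ∈ s) (hs : ∀ y ∈ s, a < y) :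
    P p (insert a s) x = P a s x := by
  have hax : a < x := hs x hx
  have hfil : (insert a s).filter (fun y => y < x) = insert a (s.filter fun y => y < x) := by
    rw [Finset.filter_insert, if_pos hax]
  rw [P, hfil, Finset.max_insert]
  cases hmax : (s.filter fun y => y < x).max with
  | bot => simp [P, hmax]
  | coe b =>
    have hb : b ∈ s.filter fun y => y < x := Finset.mem_of_max hmax
    have hab : a < b := hs b (Finset.mem_filter.1 hb).1
    rw [P, hmax]
    rw [max_eq_right (by exact_mod_cast hab.le)]
    rfl

lemma W_insert (n p a : ℕ) (s : Finset ℕ) (hs : ∀ x ∈ s, a < x) (ha : a ∉ s) :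
    W n p (insert a s) = -(((n - p).choose (a - p) : ℚ)) * W n a s := by
  rw [W, W, Finset.card_insert_of_notMem ha, Finset.prod_insert ha, pow_succ,
    P_insert_self n p a s hs,
    Finset.prod_congr rfl (fun x hx => by rw [P_insert_of_mem p a x s hx hs])]
  ring

lemma B_insert {r a : ℕ} (ha : Even a) (har : a < r) :
    B r a = insert a (B r (a + 2)) := by
  rw [Nat.even_iff] at ha
  ext x
  simp only [B, Finset.mem_filter, Finset.mem_Icc, Finset.mem_insert, Nat.even_iff]
  omega

lemma not_mem_B {r a : ℕ} : a ∉ B r (a + 2) := by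
  simp only [B, Finset.mem_filter, Finset.mem_Icc]
  omega

lemma U_rec (n r p a : ℕ) (ha : Even a) (har : a < r) :
    U n r p a = U n r p (a + 2) - ((n - p).choose (a - p) : ℚ) * U n r a (a + 2) := by
  have hmem : ∀ s ∈ (B r (a + 2)).powerset, ∀ x ∈ s, a < x := by
    intro s hs x hx
    have := (Finset.mem_powerset.1 hs) hx
    simp only [B, Finset.mem_filter, Finset.mem_Icc] at this
    omega
  rw [U, B_insert ha har, Finset.sum_powerset_insert not_mem_B]
  have h2 : ∑ s ∈ (B r (a + 2)).powerset, W n p (insert a s)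
      = -((n - p).choose (a - p) : ℚ) * U n r a (a + 2) := by
    rw [U, Finset.mul_sum]
    apply Finset.sum_congr rfl
    intro s hs
    exact W_insert n p a s (hmem s hs) (fun h => not_mem_B ((Finset.mem_powerset.1 hs) h))
  rw [h2]
  simp only [U]
  ring

lemma G_rec {E : ℕ → ℚ}
    (hE : (PowerSeries.mk fun m => if m % 2 = 0 then E m / (m.factorial : ℚ) else 0) * coshS = 1)
    (n r p a : ℕ) (hp : Even p) (ha : Even a) (hpa : p < a) (har : a < r) (hrn : r ≤ n) :
    G E n r p a = G E n r p (a + 2) - ((n - p).choose (a - p) : ℚ) * G E n r a (a + 2) := by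
  rw [Nat.even_iff] at hp ha
  have h1 : D E (a - p) (a - p) = -1 := D_self hE _ (by omega) (by omega)
  have h2 : ∀ j ∈ B r (a + 2),
      ((n - p).choose (j - p) : ℚ) * D E (j - p) (a - p)
        = ((n - p).choose (j - p) : ℚ) * D E (j - p) ((a + 2) - p)
          - ((n - p).choose (a - p) : ℚ) * (((n - a).choose (j - a) : ℚ) * E (j - a)) := by
    intro j hj
    simp only [B, Finset.mem_filter, Finset.mem_Icc] at hj
    have hj1 : a + 2 ≤ j := hj.1.1
    have hj2 : j ≤ r - 1 := hj.1.2
    have hD : D E (j - p) ((a - p) + 2)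
        = D E (j - p) (a - p) + (((j - p).choose (a - p) : ℚ)) * E ((j - p) - (a - p)) :=
      D_step E _ _ (Nat.even_iff.2 (by omega))
    have e1 : (a + 2) - p = (a - p) + 2 := by omega
    have e2 : (j - p) - (a - p) = j - a := by omega
    have hch : ((n - p).choose (j - p) : ℚ) * (((j - p).choose (a - p)) : ℚ)
        = ((n - p).choose (a - p) : ℚ) * ((n - a).choose (j - a) : ℚ) := by
      have h := Nat.choose_mul (n := n - p) (show a - p ≤ j - p by omega)
      rw [show n - p - (a - p) = n - a by omega, e2] at h
      exact_mod_cast h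
    rw [e1, hD, e2]
    linear_combination (-(E (j - a))) * hch
  have hG2 : G E n r a (a + 2) = 1 + ∑ j ∈ B r (a + 2), ((n - a).choose (j - a) : ℚ) * E (j - a) := by
    rw [G]
    congr 1
    apply Finset.sum_congr rfl
    intro j hj
    rw [show (a + 2) - a = 2 by omega, D_two]
  rw [G, B_insert (Nat.even_iff.2 ha) har, Finset.sum_insert not_mem_B,
    Finset.sum_congr rfl h2, Finset.sum_sub_distrib, h1, hG2, G, ← Finset.mul_sum]
  ring

lemma U_eq_G {E : ℕ → ℚ}
    (hE : (PowerSeries.mk fun m => if m % 2 = 0 then E m / (m.factorial : ℚ) else 0) * coshS = 1)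
    (n r : ℕ) (hrn : r ≤ n) (hr : 1 ≤ r) :
    ∀ N p a, Even p → Even a → p < a → r ≤ a + 2 * N → U n r p a = G E n r p a := by
  intro N
  induction N with
  | zero =>
    intro p a _ _ _ hra
    rw [U_base (by omega) hr, G_base (by omega) hr]
  | succ N IH =>
    intro p a hp ha hpa hra
    by_cases hc : r ≤ a
    · rw [U_base hc hr, G_base hc hr]
    · push_neg at hc
      have ha2 : Even (a + 2) := by rw [Nat.even_iff] at ha ⊢; omega
      rw [U_rec n r p a ha hc, G_rec hE n r p a hp ha hpa hc hrn,
        IH p (a + 2) hp ha2 (by omega) (by omega),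
        IH a (a + 2) ha ha2 (by omega) (by omega)]

/-! ### from tuples to finsets -/

lemma vals_even {m r : ℕ} (f : Fin m → Fin r)
    (h1 : ∀ i, prevVal f i < (f i : ℕ)) (h2 : ∀ i, Even ((f i : ℕ) - prevVal f i)) :
    ∀ i : Fin m, Even (f i : ℕ) ∧ 2 ≤ (f i : ℕ) := by
  have key : ∀ k, ∀ hk : k < m, Even ((f ⟨k, hk⟩ : ℕ)) := by
    intro k
    induction k using Nat.strong_induction_on with
    | _ k IH =>
      intro hk
      have e2 := h2 ⟨k, hk⟩
      have e1 := h1 ⟨k, hk⟩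
      rcases Nat.eq_zero_or_pos k with rfl | hkpos
      · simpa [prevVal] using e2
      · have hne : ((⟨k, hk⟩ : Fin m) : ℕ) ≠ 0 := by simpa using hkpos.ne'
        have hprev : prevVal f ⟨k, hk⟩
            = (f ⟨k - 1, Nat.lt_of_le_of_lt (Nat.sub_le _ _) hk⟩ : ℕ) := by
          simp [prevVal, hkpos.ne']
        have hpe : Even (f ⟨k - 1, Nat.lt_of_le_of_lt (Nat.sub_le _ _) hk⟩ : ℕ) :=
          IH (k - 1) (by omega) _
        rw [hprev] at e2 e1
        rw [Nat.even_sub e1.le] at e2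
        exact e2.2 hpe
  intro i
  have he := key i.val i.isLt
  rw [Fin.eta] at he
  refine ⟨he, ?_⟩
  have h := h1 i
  rcases he with ⟨t, ht⟩
  omega

lemma max_filter {m r : ℕ} (f : Fin m → Fin r) (hf : StrictMono f) (i : Fin m) :
    P 0 (Finset.image (fun k => ((f k : ℕ))) Finset.univ) (f i : ℕ) = prevVal f i := by
  have hgm : StrictMono (fun k => ((f k : ℕ))) := fun x y h => by
    exact_mod_cast hf h
  rcases Nat.eq_zero_or_pos (i : ℕ) with h0 | h0
  · have hemp : (Finset.image (fun k => ((f k : ℕ))) Finset.univ).filter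
        (fun y => y < (f i : ℕ)) = ∅ := by
      ext x
      simp only [Finset.mem_filter, Finset.mem_image, Finset.mem_univ, true_and,
        Finset.notMem_empty, iff_false, not_and]
      rintro ⟨k, rfl⟩ hlt
      have : k < i := hgm.lt_iff_lt.1 hlt
      rw [Fin.lt_def] at this
      omega
    rw [P, hemp]
    simp [prevVal, h0]
  · have h0' : (i : ℕ) ≠ 0 := h0.ne'
    set i' : Fin m := ⟨(i : ℕ) - 1, Nat.lt_of_le_of_lt (Nat.sub_le _ _) i.isLt⟩ with hi'def
    have hi' : i' < i := by rw [Fin.lt_def]; simp [hi'def]; omega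
    have hmax : ((Finset.image (fun k => ((f k : ℕ))) Finset.univ).filter
        (fun y => y < (f i : ℕ))).max = ((f i' : ℕ) : WithBot ℕ) := by
      apply le_antisymm
      · apply Finset.max_le
        intro y hy
        simp only [Finset.mem_filter, Finset.mem_image, Finset.mem_univ, true_and] at hy
        obtain ⟨⟨k, rfl⟩, hlt⟩ := hy
        have hki : k < i := hgm.lt_iff_lt.1 hlt
        have : k ≤ i' := by
          rw [Fin.le_def]; rw [Fin.lt_def] at hki; simp [hi'def]; omega
        exact WithBot.coe_le_coe.2 (hgm.monotone this)
      · apply Finset.le_max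
        simp only [Finset.mem_filter, Finset.mem_image, Finset.mem_univ, true_and]
        exact ⟨⟨i', rfl⟩, hgm hi'⟩
    rw [P, hmax]
    simp only [prevVal, h0', if_neg h0']
    rfl

open scoped Classical in
lemma perM (n r m : ℕ) (hr : 1 ≤ r) :
    (∑ f ∈ Finset.univ.filter
      (fun f : Fin m → Fin r => StrictMono f ∧
        (∀ i, prevVal f i < (f i : ℕ)) ∧
        (∀ i, Even ((f i : ℕ) - prevVal f i))),
      (-1 : ℚ) ^ m * ∏ i, (((n - prevVal f i).choose ((f i : ℕ) - prevVal f i) : ℕ) : ℚ))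
    = ∑ s ∈ (B r 2).powersetCard m, W n 0 s := by
  have hlt : ∀ {x : ℕ}, x ∈ B r 2 → x < r := by
    intro x hx
    simp only [B, Finset.mem_filter, Finset.mem_Icc] at hx
    omega
  refine Finset.sum_bij'
    (i := fun f _ => Finset.image (fun k => ((f k : ℕ))) Finset.univ)
    (j := fun s hs k => ⟨(s.orderEmbOfFin (Finset.mem_powersetCard.1 hs).2 k : ℕ),
      hlt ((Finset.mem_powersetCard.1 hs).1
        (Finset.orderEmbOfFin_mem s (Finset.mem_powersetCard.1 hs).2 k))⟩)
    ?_ ?_ ?_ ?_ ?_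
  · -- hi
    intro f hf
    simp only [Finset.mem_filter, Finset.mem_univ, true_and] at hf
    obtain ⟨hmono, hlt', hev⟩ := hf
    rw [Finset.mem_powersetCard]
    constructor
    · intro x hx
      simp only [Finset.mem_image, Finset.mem_univ, true_and] at hx
      obtain ⟨k, rfl⟩ := hx
      have h := vals_even f hlt' hev k
      have hklt : (f k : ℕ) < r := (f k).isLt
      simp only [B, Finset.mem_filter, Finset.mem_Icc]
      exact ⟨⟨h.2, by omega⟩, h.1⟩
    · rw [Finset.card_image_of_injective _
        (fun x y hxy => hmono.injective (Fin.val_injective hxy))]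
      simp
  · -- hj
    intro s hs
    obtain ⟨hsub, hcard⟩ := Finset.mem_powersetCard.1 hs
    have hmem : ∀ k : Fin m, (s.orderEmbOfFin (Finset.mem_powersetCard.1 hs).2 k : ℕ) ∈ B r 2 :=
      fun k => hsub (Finset.orderEmbOfFin_mem s _ k)
    have hprop : ∀ k : Fin m, 2 ≤ (s.orderEmbOfFin (Finset.mem_powersetCard.1 hs).2 k : ℕ) ∧
        (s.orderEmbOfFin (Finset.mem_powersetCard.1 hs).2 k : ℕ) ≤ r - 1 ∧
        Even (s.orderEmbOfFin (Finset.mem_powersetCard.1 hs).2 k : ℕ) := by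
      intro k
      have := hmem k
      simp only [B, Finset.mem_filter, Finset.mem_Icc] at this
      tauto
    have hsm : StrictMono (fun k : Fin m => (s.orderEmbOfFin (Finset.mem_powersetCard.1 hs).2 k : ℕ)) :=
      (s.orderEmbOfFin _).strictMono
    simp only [Finset.mem_filter, Finset.mem_univ, true_and]
    refine ⟨fun x y h => ?_, fun k => ?_, fun k => ?_⟩
    · simp only [Fin.lt_def]
      exact hsm h
    · by_cases hk : (k : ℕ) = 0
      · simp only [prevVal, hk, if_pos]
        exact lt_of_lt_of_le zero_lt_two (hprop k).1
      · simp only [prevVal, if_neg hk]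
        exact hsm (show (⟨(k : ℕ) - 1, _⟩ : Fin m) < k by rw [Fin.lt_def]; simp; omega)
    · by_cases hk : (k : ℕ) = 0
      · simp only [prevVal, hk, if_pos]
        simpa using (hprop k).2.2
      · simp only [prevVal, if_neg hk]
        have hle : (s.orderEmbOfFin (Finset.mem_powersetCard.1 hs).2
              ⟨(k : ℕ) - 1, Nat.lt_of_le_of_lt (Nat.sub_le _ _) k.isLt⟩ : ℕ)
            ≤ (s.orderEmbOfFin (Finset.mem_powersetCard.1 hs).2 k : ℕ) := by
          apply le_of_lt
          exact hsm (show (⟨(k : ℕ) - 1, _⟩ : Fin m) < k by rw [Fin.lt_def]; simp; omega)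
        rw [Nat.even_sub hle]
        constructor <;> intro
        · exact (hprop _).2.2
        · exact (hprop _).2.2
  · -- left_inv
    intro f hf
    simp only [Finset.mem_filter, Finset.mem_univ, true_and] at hf
    obtain ⟨hmono, hlt', hev⟩ := hf
    have hgm : StrictMono (fun k : Fin m => ((f k : ℕ))) := fun x y h => by
      exact_mod_cast hmono h
    have hcardim : (Finset.image (fun k : Fin m => ((f k : ℕ))) Finset.univ).card = m := by
      rw [Finset.card_image_of_injective _
        (fun x y hxy => hmono.injective (Fin.val_injective hxy) :
          Function.Injective fun k : Fin m => ((f k : ℕ))), Finset.card_univ, Fintype.card_fin]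
    have huniq := Finset.orderEmbOfFin_unique hcardim
      (f := fun k : Fin m => ((f k : ℕ)))
      (fun x => Finset.mem_image_of_mem _ (Finset.mem_univ x)) hgm
    funext k
    apply Fin.ext
    exact (congrFun huniq k).symm
  · -- right_inv
    intro s hs
    obtain ⟨hsub, hcard⟩ := Finset.mem_powersetCard.1 hs
    show Finset.image
        (fun k : Fin m => s.orderEmbOfFin (Finset.mem_powersetCard.1 hs).2 k) Finset.univ = s
    apply Finset.eq_of_subset_of_card_le
    · intro x hx
      simp only [Finset.mem_image, Finset.mem_univ, true_and] at hx
      obtain ⟨k, rfl⟩ := hx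
      exact Finset.orderEmbOfFin_mem s _ k
    · rw [Finset.card_image_of_injective _
        (s.orderEmbOfFin (Finset.mem_powersetCard.1 hs).2).injective,
        Finset.card_univ, Fintype.card_fin, hcard]
  · -- value equality
    intro f hf
    simp only [Finset.mem_filter, Finset.mem_univ, true_and] at hf
    obtain ⟨hmono, hlt', hev⟩ := hf
    have hinj : ∀ x ∈ Finset.univ, ∀ y ∈ Finset.univ,
        ((f x : ℕ)) = ((f y : ℕ)) → x = y :=
      fun x _ y _ hxy => hmono.injective (Fin.val_injective hxy)
    rw [W, Finset.card_image_of_injective _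
        (fun x y hxy => hmono.injective (Fin.val_injective hxy)), Finset.card_univ,
      Fintype.card_fin, Finset.prod_image hinj]
    congr 1
    apply Finset.prod_congr rfl
    intro k _
    simp only [max_filter f hmono]

open scoped Classical in
lemma cdLHS_eq (n r : ℕ) (hr : 1 ≤ r) : cdLHS n r = U n r 0 2 := by
  have hcard : (B r 2).card ≤ r := by
    calc (B r 2).card ≤ (Finset.Icc 2 (r - 1)).card := Finset.card_filter_le _ _
    _ = r - 1 + 1 - 2 := by rw [Nat.card_Icc]
    _ ≤ r := by omega
  rw [U, Finset.sum_powerset]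
  have hext : ∑ j ∈ Finset.range ((B r 2).card + 1),
        ∑ t ∈ Finset.powersetCard j (B r 2), W n 0 t
      = ∑ j ∈ Finset.range (r + 1), ∑ t ∈ Finset.powersetCard j (B r 2), W n 0 t := by
    apply Finset.sum_subset
    · exact Finset.range_subset_range.2 (by omega)
    · intro x _ hx
      rw [Finset.mem_range, not_lt] at hx
      rw [Finset.powersetCard_eq_empty.2 (by omega), Finset.sum_empty]
  rw [hext, Finset.sum_range_succ']
  have hF0 : ∑ t ∈ Finset.powersetCard 0 (B r 2), W n 0 t = 1 := by
    rw [Finset.powersetCard_zero, Finset.sum_singleton, W_empty]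
  rw [hF0, cdLHS, show Finset.Icc 1 r = Finset.Ico 1 (r + 1) by rw [Finset.Ico_add_one_right_eq_Icc],
    Finset.sum_Ico_eq_sum_range]
  simp only [add_tsub_cancel_right]
  rw [add_comm]
  congr 1
  apply Finset.sum_congr rfl
  intro j _
  rw [show j + 1 = 1 + j from Nat.add_comm j 1]
  exact perM n r (1 + j) hr


end CDaux

/-- For odd `1 ≤ r ≤ n`, the Charney–Davis quantity of the Chow ring of the uniform matroid
`U_{n,r}` equals `∑_{k=0}^{(r-1)/2} C(n,2k) E_{2k}`, where the `E_{2k}` are the secant numbers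
(defined by `(∑ E_{2k} x^{2k}/(2k)!) · cosh x = 1`). -/
theorem stmt9 (E : ℕ → ℚ)
    (hE : (PowerSeries.mk fun m => if m % 2 = 0 then E m / (m.factorial : ℚ) else 0) * coshS = 1)
    (n r : ℕ) (hodd : Odd r) (h1 : 1 ≤ r) (h2 : r ≤ n) :
    cdLHS n r = ∑ k ∈ Finset.range ((r - 1) / 2 + 1), (n.choose (2 * k) : ℚ) * E (2 * k) := by
  classical
  have hr2 : r % 2 = 1 := Nat.odd_iff.1 hodd
  rw [CDaux.cdLHS_eq n r h1,
    CDaux.U_eq_G hE n r h2 h1 r 0 2 Even.zero (by decide) (by omega) (by omega), CDaux.G]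
  have hsimp : ∀ j ∈ CDaux.B r 2,
      ((n - 0).choose (j - 0) : ℚ) * CDaux.D E (j - 0) (2 - 0) = (n.choose j : ℚ) * E j := by
    intro j hj
    simp only [Nat.sub_zero]
    rw [CDaux.D_two]
  rw [Finset.sum_congr rfl hsimp, Finset.sum_range_succ']
  simp only [Nat.mul_zero, Nat.choose_zero_right, Nat.cast_one, one_mul, CDaux.E_zero hE]
  rw [add_comm]
  congr 1
  refine Finset.sum_bij' (i := fun j _ => j / 2 - 1) (j := fun k _ => 2 * (k + 1))
    ?_ ?_ ?_ ?_ ?_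
  · intro j hj
    simp only [CDaux.B, Finset.mem_filter, Finset.mem_Icc, Nat.even_iff] at hj
    show j / 2 - 1 ∈ Finset.range ((r - 1) / 2)
    rw [Finset.mem_range]
    omega
  · intro k hk
    rw [Finset.mem_range] at hk
    show 2 * (k + 1) ∈ CDaux.B r 2
    simp only [CDaux.B, Finset.mem_filter, Finset.mem_Icc, Nat.even_iff]
    omega
  · intro j hj
    simp only [CDaux.B, Finset.mem_filter, Finset.mem_Icc, Nat.even_iff] at hj
    show 2 * (j / 2 - 1 + 1) = j
    omega
  · intro k hk
    rw [Finset.mem_range] at hk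
    show 2 * (k + 1) / 2 - 1 = k
    omega
  · intro j hj
    simp only [CDaux.B, Finset.mem_filter, Finset.mem_Icc, Nat.even_iff] at hj
    show (n.choose j : ℚ) * E j = (n.choose (2 * (j / 2 - 1 + 1)) : ℚ) * E (2 * (j / 2 - 1 + 1))
    rw [show 2 * (j / 2 - 1 + 1) = j by omega]
end

section
/- The q-exponential generating function F(t,x) = \sum_{n\ge0} h_n(t) x^n/[n]_q! of the sequence defined by h_0 = 1 and h_n = 1 + t \sum_{i=1}^{n} [i-1]_t \binom{n}{i}_q h_{n-i} satisfies F(t,x) = (t-1) e_q(x) / (t e_q(x) - e_q(tx)), i.e., F(t,x) (t e_q(x) - e_q(tx)) = (t-1) e_q(x). -/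
/-- The field `ℚ(q,t)` of rational functions in the two variables `q` and `t`. -/
abbrev Kqt : Type := RatFunc (RatFunc ℚ)

/-- The variable `q` in `ℚ(q,t)`. -/
noncomputable def qv : Kqt := RatFunc.C RatFunc.X

/-- The variable `t` in `ℚ(q,t)`. -/
noncomputable def tv : Kqt := RatFunc.X

/-- The `q`-exponential `e_q(x) = ∑ x^n/[n]_q!` in `ℚ(q,t)[[x]]`. -/
noncomputable def eqS : PowerSeries Kqt := PowerSeries.mk fun n => (qFact qv n)⁻¹

/-- `e_q(tx) = ∑ t^n x^n/[n]_q!` in `ℚ(q,t)[[x]]`. -/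
noncomputable def eqtS : PowerSeries Kqt := PowerSeries.mk fun n => tv ^ n / qFact qv n

lemma poly_geom_ne_zero (m : ℕ) (hm : 1 ≤ m) :
    (∑ i ∈ Finset.range m, (Polynomial.X : Polynomial ℚ) ^ i) ≠ 0 := by
  intro hc
  have := congrArg (Polynomial.coeff · 0) hc
  simp [Polynomial.coeff_X_pow, Finset.sum_ite_eq', Finset.mem_range, hm] at this
  omega

lemma ratfunc_geom_ne_zero (m : ℕ) (hm : 1 ≤ m) :
    (∑ i ∈ Finset.range m, (RatFunc.X : RatFunc ℚ) ^ i) ≠ 0 := by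
  have heq : (∑ i ∈ Finset.range m, (RatFunc.X : RatFunc ℚ) ^ i)
      = algebraMap (Polynomial ℚ) (RatFunc ℚ) (∑ i ∈ Finset.range m, Polynomial.X ^ i) := by
    rw [map_sum]
    exact Finset.sum_congr rfl fun i _ => by rw [map_pow, RatFunc.algebraMap_X]
  rw [heq]
  exact RatFunc.algebraMap_ne_zero (poly_geom_ne_zero m hm)

lemma qInt_qv_ne_zero (m : ℕ) (hm : 1 ≤ m) : qInt qv m ≠ 0 := by
  unfold qInt qv
  have heq : (∑ i ∈ Finset.range m, (RatFunc.C RatFunc.X : Kqt) ^ i)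
      = RatFunc.C (∑ i ∈ Finset.range m, (RatFunc.X : RatFunc ℚ) ^ i) := by
    rw [map_sum]; exact Finset.sum_congr rfl fun i _ => by rw [map_pow]
  rw [heq]
  exact fun hc => ratfunc_geom_ne_zero m hm (RatFunc.C.injective (by rw [hc, map_zero]))

lemma qFact_qv_ne_zero (n : ℕ) : qFact qv n ≠ 0 := by
  induction n with
  | zero => simp [qFact]
  | succ m ih => exact mul_ne_zero ih (qInt_qv_ne_zero (m+1) (Nat.le_add_left 1 m))

/-- If `h 0 = 1` and `h n = 1 + t ∑_{i=1}^{n} [i-1]_t [n choose i]_q h_{n-i}`, then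
`F(t,x) = ∑ h_n x^n/[n]_q!` satisfies `F(t,x)(t e_q(x) - e_q(tx)) = (t-1) e_q(x)`. -/
theorem stmt12 (h : ℕ → Kqt) (h0 : h 0 = 1)
    (hrec : ∀ n : ℕ, 1 ≤ n →
      h n = 1 + tv * ∑ i ∈ Finset.Icc 1 n, qInt tv (i - 1) * qBinom qv n i * h (n - i)) :
    (PowerSeries.mk fun n => h n / qFact qv n) * (PowerSeries.C (R := Kqt) tv * eqS - eqtS)
      = PowerSeries.C (R := Kqt) (tv - 1) * eqS := by
  ext n
  have hR : PowerSeries.coeff n (PowerSeries.C (R := Kqt) (tv - 1) * eqS)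
      = (tv - 1) * (qFact qv n)⁻¹ := by
    rw [PowerSeries.coeff_C_mul]; simp [eqS]
  rw [PowerSeries.coeff_mul, Finset.Nat.sum_antidiagonal_eq_sum_range_succ_mk, hR]
  simp only [PowerSeries.coeff_mk, map_sub, PowerSeries.coeff_C_mul, eqS, eqtS,
    PowerSeries.coeff_mk]
  rcases Nat.eq_zero_or_pos n with hn | hn
  · subst hn; simp [h0, qFact]
  · rw [Finset.sum_range_succ]
    have hkey : ∑ i ∈ Finset.range n,
        h i / qFact qv i * (tv * (qFact qv (n - i))⁻¹ - tv ^ (n - i) / qFact qv (n - i))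
        = ∑ k ∈ Finset.Icc 1 n,
          -(tv * (tv - 1)) * (qInt tv (k - 1) * qBinom qv n k * h (n - k)) / qFact qv n := by
      apply Finset.sum_bij' (fun i _ => n - i) (fun k _ => n - k)
      · intro i hi
        simp only [Finset.mem_range] at hi
        simp only [Finset.mem_Icc]; omega
      · intro k hk
        simp only [Finset.mem_Icc] at hk
        simp only [Finset.mem_range]; omega
      · intro i hi; simp only [Finset.mem_range] at hi; omega
      · intro k hk; simp only [Finset.mem_Icc] at hk; omega
      · intro i hi
        simp only [Finset.mem_range] at hi
        have hk1 : 1 ≤ n - i := by omega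
        have hnk : n - (n - i) = i := by omega
        rw [hnk]
        set k := n - i with hkdef
        have hgeom : tv * (tv - 1) * qInt tv (k - 1) = tv ^ k - tv := by
          have hg := geom_sum_mul tv (k - 1)
          unfold qInt
          calc tv * (tv - 1) * ∑ j ∈ Finset.range (k-1), tv ^ j
              = tv * ((∑ j ∈ Finset.range (k-1), tv ^ j) * (tv - 1)) := by ring
            _ = tv * (tv ^ (k-1) - 1) := by rw [hg]
            _ = tv ^ k - tv := by
                rw [mul_sub, ← pow_succ', mul_one]
                congr 2
                omega
        have h1 : qFact qv i ≠ 0 := qFact_qv_ne_zero i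
        have h2 : qFact qv k ≠ 0 := qFact_qv_ne_zero k
        have h3 : qFact qv n ≠ 0 := qFact_qv_ne_zero n
        have hfac : tv * (qFact qv k)⁻¹ - tv ^ k / qFact qv k
            = -(tv * (tv - 1) * qInt tv (k - 1)) / qFact qv k := by
          field_simp
          linear_combination hgeom
        rw [hfac]
        unfold qBinom
        rw [hnk]
        field_simp
    rw [hkey]
    have hS := hrec n hn
    have htvS : tv * ∑ i ∈ Finset.Icc 1 n, qInt tv (i - 1) * qBinom qv n i * h (n - i)
        = h n - 1 := by rw [hS]; ring
    have : ∑ k ∈ Finset.Icc 1 n,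
          -(tv * (tv - 1)) * (qInt tv (k - 1) * qBinom qv n k * h (n - k)) / qFact qv n
        = -(tv - 1) * (tv * ∑ i ∈ Finset.Icc 1 n, qInt tv (i-1) * qBinom qv n i * h (n-i))
            / qFact qv n := by
      rw [Finset.mul_sum, ← Finset.sum_div, Finset.mul_sum]
      congr 1
      exact Finset.sum_congr rfl fun k _ => by ring
    rw [this, htvS]
    have h3 : qFact qv n ≠ 0 := qFact_qv_ne_zero n
    rw [Nat.sub_self]
    simp only [qFact, pow_zero]
    field_simp
    ring
end

section
/- The derangement sums D_{n,k} := #\{\sigma \in D_n : exc(\sigma) = n-k\} satisfy D_{n,k} = A(n, n-k) - \sum_{b\ge1} \binom{n}{n-b} D_{n-b, k-b}, where A(n,j) is the Eulerian number #\{\sigma \in S_n : exc(\sigma) = j\}. -/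
/-- Number of excedances of a permutation of `Fin n`. -/
def exc {n : ℕ} (σ : Equiv.Perm (Fin n)) : ℕ :=
  (Finset.univ.filter fun i : Fin n => (i : ℕ) < (σ i : ℕ)).card

/-- `D_{m,k} = #{σ ∈ D_m : exc σ = m - k}` (the condition `exc σ = m - k` is read in `ℤ`,
so `D_{m,k} = 0` when `k > m` makes the set empty). -/
def Dnum (m k : ℕ) : ℕ :=
  (Finset.univ.filter
    (fun σ : Equiv.Perm (Fin m) => (∀ j, σ j ≠ j) ∧ (exc σ : ℤ) = (m : ℤ) - k)).card

/-- The Eulerian number `A(n,j) = #{σ ∈ S_n : exc σ = j}` (with `j : ℤ`). -/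
def Anum (n : ℕ) (j : ℤ) : ℕ :=
  (Finset.univ.filter (fun σ : Equiv.Perm (Fin n) => (exc σ : ℤ) = j)).card

open Finset Equiv

/-- derangements of `Fin m` with `exc = j` (j an integer). -/
def Dpr (m : ℕ) (j : ℤ) : ℕ :=
  (Finset.univ.filter
    (fun σ : Equiv.Perm (Fin m) => (∀ i, σ i ≠ i) ∧ (exc σ : ℤ) = j)).card

lemma fiber_card (n : ℕ) (j : ℤ) (s : Finset (Fin n)) :
    ((Finset.univ.filter (fun σ : Equiv.Perm (Fin n) => (exc σ : ℤ) = j)).filter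
      (fun σ => Finset.univ.filter (fun i => σ i = i) = s)).card
    = Dpr (sᶜ.card) j := by
  classical
  set c := sᶜ with hc
  let e : Fin c.card ≃o {x // x ∈ c} := c.orderIsoOfFin rfl
  -- forward extension map
  let F : Perm (Fin c.card) → Perm (Fin n) := fun τ =>
    Equiv.Perm.ofSubtype (e.toEquiv.permCongr τ)
  have hFmem : ∀ (τ : Perm (Fin c.card)) (x : Fin n) (hx : x ∈ c),
      F τ x = ↑(e (τ (e.symm ⟨x, hx⟩))) := by
    intro τ x hx
    show Equiv.Perm.ofSubtype _ x = _
    rw [Equiv.Perm.ofSubtype_apply_of_mem _ hx]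
    simp [Equiv.permCongr_apply]
  have hFnot : ∀ (τ : Perm (Fin c.card)) (x : Fin n), x ∉ c → F τ x = x := by
    intro τ x hx
    exact Equiv.Perm.ofSubtype_apply_of_not_mem _ hx
  have hfix : ∀ (τ : Perm (Fin c.card)), (∀ i, τ i ≠ i) →
      ∀ x : Fin n, (F τ x = x ↔ x ∈ s) := by
    intro τ hτ x
    by_cases hx : x ∈ c
    · rw [hFmem τ x hx]
      constructor
      · intro h
        exfalso
        apply hτ (e.symm ⟨x, hx⟩)
        apply e.injective
        apply Subtype.ext
        simpa using h
      · intro h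
        exact absurd hx (by simpa [hc] using h)
    · rw [hFnot τ x hx]
      simp only [hc, Finset.mem_compl, not_not] at hx
      simp [hx]
  have hFe : ∀ (τ : Perm (Fin c.card)) (i : Fin c.card),
      F τ ((e i : {x // x ∈ c}) : Fin n) = ((e (τ i) : {x // x ∈ c}) : Fin n) := by
    intro τ i
    rw [hFmem τ _ (e i).2]
    congr 2
    have h3 : (⟨((e i : {x // x ∈ c}) : Fin n), (e i).2⟩ : {x // x ∈ c}) = e i := rfl
    rw [h3, e.symm_apply_apply]
  have key : ∀ i j : Fin c.card,
      (((e i : {x // x ∈ c}) : Fin n) : ℕ) < (((e j : {x // x ∈ c}) : Fin n) : ℕ)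
        ↔ (i : ℕ) < (j : ℕ) := by
    intro i j
    rw [← Fin.lt_def, Subtype.coe_lt_coe, e.lt_iff_lt, Fin.lt_def]
  have hexc : ∀ τ : Perm (Fin c.card), exc (F τ) = exc τ := by
    intro τ
    unfold exc
    symm
    apply Finset.card_nbij (i := fun i => ((e i : {x // x ∈ c}) : Fin n))
    · intro i hi
      simp only [Finset.mem_coe, Finset.mem_filter, Finset.mem_univ, true_and] at hi ⊢
      rw [hFe τ i]
      exact (key i (τ i)).mpr hi
    · intro a _ b _ hab
      exact e.injective (Subtype.ext hab)
    · intro x hx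
      simp only [Finset.coe_filter, Set.mem_setOf_eq, Finset.mem_univ, true_and] at hx
      have hne : F τ x ≠ x := by
        intro h; rw [h] at hx; exact lt_irrefl _ hx
      have hxc : x ∈ c := by
        by_contra hxc; exact hne (hFnot τ x hxc)
      refine ⟨e.symm ⟨x, hxc⟩, ?_, by simp⟩
      simp only [Finset.coe_filter, Set.mem_setOf_eq, Finset.mem_univ, true_and]
      have h2 : F τ x = ((e (τ (e.symm ⟨x, hxc⟩)) : {x // x ∈ c}) : Fin n) := hFmem τ x hxc
      rw [h2] at hx
      have h3 : (((e (e.symm ⟨x, hxc⟩) : {x // x ∈ c}) : Fin n) : ℕ) = (x : ℕ) := by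
        rw [e.apply_symm_apply]
      exact (key _ _).mp (by rw [h3]; exact hx)
  have hfix2 : ∀ σ : Perm (Fin n), Finset.univ.filter (fun i => σ i = i) = s →
      ∀ y, (σ y = y ↔ y ∈ s) := by
    intro σ hs y; rw [← hs]; simp
  have hmem : ∀ σ : Perm (Fin n), Finset.univ.filter (fun i => σ i = i) = s →
      ∀ x : Fin n, σ x ∈ c ↔ x ∈ c := by
    intro σ hs x
    rw [Iff.comm]
    rw [hc, Finset.mem_compl, Finset.mem_compl, ← hfix2 σ hs, ← hfix2 σ hs (σ x)]
    constructor
    · intro h h2; exact h (σ.injective h2)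
    · intro h h2; exact h (by rw [h2]; exact h2)
  have hFH : ∀ (σ : Perm (Fin n)) (h : ∀ x : Fin n, σ x ∈ c ↔ x ∈ c)
      (hs : Finset.univ.filter (fun i => σ i = i) = s),
      F (e.toEquiv.symm.permCongr (σ.subtypePerm h)) = σ := by
    intro σ h hs
    apply Equiv.ext
    intro x
    by_cases hx : x ∈ c
    · rw [hFmem _ x hx]
      simp [Equiv.permCongr_apply, Equiv.Perm.subtypePerm_apply]
    · rw [hFnot _ x hx]
      have hxs : x ∈ s := by simpa [hc] using hx
      exact ((hfix2 σ hs x).mpr hxs).symm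
  have hHF : ∀ (τ : Perm (Fin c.card)) (h : ∀ x : Fin n, (F τ) x ∈ c ↔ x ∈ c),
      e.toEquiv.symm.permCongr ((F τ).subtypePerm h) = τ := by
    intro τ h
    apply Equiv.ext
    intro i
    show (e.symm ((F τ).subtypePerm h ((e.toEquiv.symm.symm) i)) : Fin c.card) = τ i
    have h4 : (F τ).subtypePerm h (e.toEquiv.symm.symm i) = e (τ i) := by
      apply Subtype.ext
      show F τ ((e i : {x // x ∈ c}) : Fin n) = _
      exact hFe τ i
    rw [h4, e.symm_apply_apply]
  rw [Dpr]
  apply Finset.card_bij'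
    (i := fun σ hσ => e.toEquiv.symm.permCongr
        (σ.subtypePerm (hmem σ (Finset.mem_filter.mp hσ).2)))
    (t := Finset.univ.filter
      (fun σ : Equiv.Perm (Fin c.card) => (∀ i, σ i ≠ i) ∧ (exc σ : ℤ) = j))
    (j := fun τ _ => F τ)
  case hi =>
    intro σ hσ
    obtain ⟨hσ1, hs⟩ := Finset.mem_filter.mp hσ
    obtain ⟨-, hj1⟩ := Finset.mem_filter.mp hσ1
    simp only [Finset.mem_filter, Finset.mem_univ, true_and]
    constructor
    · intro i hi
      have hi' : e.symm (σ.subtypePerm (hmem σ hs) (e i)) = i := by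
        simpa [Equiv.permCongr_apply] using hi
      have hi2 : σ.subtypePerm (hmem σ hs) (e i) = e i := by
        have h5 := congrArg e hi'
        rwa [e.apply_symm_apply] at h5
      have hfixpt : σ ((e i : {x // x ∈ c}) : Fin n) = ((e i : {x // x ∈ c}) : Fin n) :=
        congrArg Subtype.val hi2
      have hin : ((e i : {x // x ∈ c}) : Fin n) ∈ s := (hfix2 σ hs _).mp hfixpt
      exact Finset.mem_compl.mp (e i).2 hin
    · have h6 := hexc (e.toEquiv.symm.permCongr (σ.subtypePerm (hmem σ hs)))
      rw [hFH σ (hmem σ hs) hs] at h6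
      rw [h6] at hj1
      exact hj1
  case left_inv =>
    intro σ hσ
    exact hFH _ _ (Finset.mem_filter.mp hσ).2
  case right_inv =>
    intro τ hτ
    exact hHF _ _
  case hj =>
    intro τ hτ
    obtain ⟨-, hτ1, hτ2⟩ := Finset.mem_filter.mp hτ
    rw [Finset.mem_filter]
    refine ⟨Finset.mem_filter.mpr ⟨Finset.mem_univ _, ?_⟩, ?_⟩
    · rw [hexc τ]; exact hτ2
    · ext x
      simp only [Finset.mem_filter, Finset.mem_univ, true_and]
      exact hfix τ hτ1 x


lemma Anum_eq (n : ℕ) (j : ℤ) :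
    Anum n j = ∑ b ∈ Finset.range (n + 1), n.choose b * Dpr (n - b) j := by
  classical
  rw [Anum]
  rw [Finset.card_eq_sum_card_fiberwise
    (f := fun σ : Equiv.Perm (Fin n) => Finset.univ.filter fun i => σ i = i)
    (t := (Finset.univ : Finset (Fin n)).powerset)
    (fun σ _ => Finset.mem_powerset.mpr (Finset.subset_univ _))]
  have h1 : ∀ s ∈ (Finset.univ : Finset (Fin n)).powerset,
      ((Finset.univ.filter (fun σ : Equiv.Perm (Fin n) => (exc σ : ℤ) = j)).filter
        (fun σ => Finset.univ.filter (fun i => σ i = i) = s)).card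
      = Dpr (n - s.card) j := by
    intro s _
    rw [fiber_card n j s]
    congr 1
    rw [Finset.card_compl]
    simp
  rw [Finset.sum_congr rfl h1]
  rw [Finset.sum_powerset_apply_card (f := fun b => Dpr (n - b) j)]
  simp [Finset.card_univ, smul_eq_mul]

lemma Dpr_eq_zero (m : ℕ) (j : ℤ) (h : (m : ℤ) < j) : Dpr m j = 0 := by
  rw [Dpr, Finset.card_eq_zero]
  rw [Finset.filter_eq_empty_iff]
  intro σ _
  rintro ⟨-, hj⟩
  have hle : exc σ ≤ m := le_trans (Finset.card_filter_le _ _) (by simp)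
  have : (exc σ : ℤ) ≤ (m : ℤ) := by exact_mod_cast hle
  omega


/-- `D_{n,k} = A(n, n-k) - ∑_{b=1}^{min(n,k)} C(n, n-b) D_{n-b, k-b}`. -/
theorem stmt17 (n k : ℕ) :
    (Dnum n k : ℤ) = (Anum n ((n : ℤ) - k) : ℤ) -
      ∑ b ∈ Finset.Icc 1 (min n k), ((n.choose (n - b)) : ℤ) * (Dnum (n - b) (k - b) : ℤ) := by
  classical
  have h0 : Dpr n ((n : ℤ) - k) = Dnum n k := rfl
  have hA := Anum_eq n ((n : ℤ) - k)
  rw [Finset.sum_range_succ'] at hA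
  have h2 : ∑ i ∈ Finset.range n, n.choose (i + 1) * Dpr (n - (i + 1)) ((n : ℤ) - k)
      = ∑ b ∈ Finset.Icc 1 n, n.choose b * Dpr (n - b) ((n : ℤ) - k) := by
    have : Finset.Icc 1 n = Finset.Ico 1 (n + 1) := by
      rw [Finset.Ico_add_one_right_eq_Icc]
    rw [this, Finset.sum_Ico_eq_sum_range]
    simp only [Nat.add_sub_cancel]
    exact Finset.sum_congr rfl (fun i _ => by rw [Nat.add_comm 1 i])
  have h3 : ∑ b ∈ Finset.Icc 1 n, n.choose b * Dpr (n - b) ((n : ℤ) - k)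
      = ∑ b ∈ Finset.Icc 1 (min n k), n.choose (n - b) * Dnum (n - b) (k - b) := by
    rw [← Finset.sum_subset (Finset.Icc_subset_Icc_right (min_le_left n k))]
    · apply Finset.sum_congr rfl
      intro b hb
      obtain ⟨hb1, hb2⟩ := Finset.mem_Icc.mp hb
      have hbn : b ≤ n := le_trans hb2 (min_le_left n k)
      have hbk : b ≤ k := le_trans hb2 (min_le_right n k)
      rw [Nat.choose_symm hbn]
      congr 1
      show Dpr (n - b) ((n : ℤ) - k) = Dnum (n - b) (k - b)
      rw [Dnum, Dpr]
      have : ((n - b : ℕ) : ℤ) - ((k - b : ℕ) : ℤ) = (n : ℤ) - k := by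
        push_cast [Nat.cast_sub hbn, Nat.cast_sub hbk]
        ring
      rw [this]
    · intro b hb hnb
      obtain ⟨hb1, hb2⟩ := Finset.mem_Icc.mp hb
      have hbk : k < b := by
        by_contra h
        push_neg at h
        exact hnb (Finset.mem_Icc.mpr ⟨hb1, le_min hb2 h⟩)
      have : Dpr (n - b) ((n : ℤ) - k) = 0 := by
        apply Dpr_eq_zero
        have : ((n - b : ℕ) : ℤ) = (n : ℤ) - b := by
          push_cast [Nat.cast_sub hb2]; ring
        rw [this]
        omega
      rw [this, Nat.mul_zero]
  rw [h2, h3, Nat.choose_zero_right, Nat.sub_zero, h0, Nat.one_mul] at hA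
  have := congrArg (Nat.cast : ℕ → ℤ) hA
  push_cast at this
  linarith
end
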